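/- arXiv:2211.10276 — 6 statements merged into one kernel-verified Lean document; each statement's English description precedes it below -/
import Mathlib

section
/- Let ψ: A* → B* be a monoid homomorphism between free monoids over finite alphabets induced by a set map A → B*. If L ⊆ B* is a context-free language, then ψ^{-1}(L) ⊆ A* is a context-free language. -/
namespace InvHomCF

open Symbol

variable {A B : Type}

/-- All letters of `w` have empty image. -/
def NullW (ψ : A → List B) (w : List A) : Prop := ∀ x ∈ w, ψ x = []

/-- Transducer states: boundary (`none`) or inside the image of a letter. -/
abbrev QS (ψ : A → List B) : Type := Option (Σ a : A, Fin (ψ a).length)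

variable (ψ : A → List B)

def after (a : A) (j : ℕ) : QS ψ :=
  if h : j < (ψ a).length then some ⟨a, ⟨j, h⟩⟩ else none

def rem : QS ψ → List B
  | none => []
  | some ⟨a, i⟩ => (ψ a).drop i

lemma rem_after (a : A) (j : ℕ) : rem ψ (after ψ a j) = (ψ a).drop j := by
  rcases Nat.lt_or_ge j (ψ a).length with h | h
  · unfold after; rw [dif_pos h]; rfl
  · unfold after; rw [dif_neg (not_lt.mpr h)]
    simp [rem, List.drop_eq_nil_of_le h]

inductive Step : QS ψ → B → List A → QS ψ → Prop
  | boundary (e : List A) (he : NullW ψ e) (a : A) (b : B) (bs : List B)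
      (hab : ψ a = b :: bs) : Step none b (e ++ [a]) (after ψ a 1)
  | mid (a : A) (i : Fin (ψ a).length) :
      Step (some ⟨a, i⟩) ((ψ a).get i) [] (after ψ a (i + 1))

inductive Run : QS ψ → List B → List A → QS ψ → Prop
  | nil (q : QS ψ) : Run q [] [] q
  | cons {q : QS ψ} {b : B} {w₁ : List A} {q' : QS ψ} {v : List B} {w₂ : List A} {q'' : QS ψ} :
      Step ψ q b w₁ q' → Run q' v w₂ q'' → Run q (b :: v) (w₁ ++ w₂) q''

lemma nullW_flatMap {ψ : A → List B} {e : List A} (he : NullW ψ e) : e.flatMap ψ = [] := by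
  induction e with
  | nil => rfl
  | cons a e ih =>
    have ha := he a (by simp)
    simp [ha, ih fun x hx => he x (by simp [hx])]

lemma run_sound {q : QS ψ} {v : List B} {w : List A} {q' : QS ψ}
    (h : Run ψ q v w q') (hq' : q' = none) : v = rem ψ q ++ w.flatMap ψ := by
  induction h with
  | nil q => subst hq'; simp [rem]
  | cons hs hr ih =>
    have ih := ih hq'
    cases hs with
    | boundary e he a b bs hab =>
      rw [rem_after] at ih
      simp only [rem, List.flatMap_append, List.flatMap_cons, List.flatMap_nil,
        nullW_flatMap he, List.nil_append, List.append_nil]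
      rw [ih, hab]
      simp
    | mid a i =>
      rw [rem_after] at ih
      have hd : rem ψ (some ⟨a, i⟩) = (ψ a).get i :: (ψ a).drop (↑i + 1) := by
        show (ψ a).drop ↑i = _
        rw [List.drop_eq_getElem_cons i.isLt, List.get_eq_getElem]
      rw [List.nil_append, hd, ih, List.cons_append]

lemma run_append {q q' q'' : QS ψ} {v₁ v₂ : List B} {w₁ w₂ : List A}
    (h₁ : Run ψ q v₁ w₁ q') (h₂ : Run ψ q' v₂ w₂ q'') :
    Run ψ q (v₁ ++ v₂) (w₁ ++ w₂) q'' := by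
  induction h₁ with
  | nil => simpa using h₂
  | cons hs hr ih =>
    rw [List.cons_append, List.append_assoc]
    exact Run.cons hs (ih h₂)

lemma run_after (a : A) : ∀ j : ℕ, Run ψ (after ψ a j) ((ψ a).drop j) [] none := by
  have key : ∀ n j, (ψ a).length - j ≤ n → Run ψ (after ψ a j) ((ψ a).drop j) [] none := by
    intro n
    induction n with
    | zero =>
      intro j hj
      have hle : (ψ a).length ≤ j := by omega
      have h1 : after ψ a j = none := by unfold after; rw [dif_neg (by omega)]
      rw [h1, List.drop_eq_nil_of_le hle]
      exact Run.nil none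
    | succ n ih =>
      intro j hj
      by_cases hlt : j < (ψ a).length
      · have h1 : after ψ a j = some ⟨a, ⟨j, hlt⟩⟩ := by unfold after; rw [dif_pos hlt]
        rw [h1]
        have hstep := Step.mid (ψ := ψ) a ⟨j, hlt⟩
        have hrest := ih (j + 1) (by omega)
        have := Run.cons hstep hrest
        simp only [List.nil_append] at this
        rw [List.drop_eq_getElem_cons hlt]
        simpa [List.get_eq_getElem] using this
      · have h1 : after ψ a j = none := by unfold after; rw [dif_neg hlt]
        rw [h1, List.drop_eq_nil_of_le (by omega)]
        exact Run.nil none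
  exact fun j => key ((ψ a).length - j) j le_rfl

lemma run_block {a : A} {b : B} {bs : List B} (hab : ψ a = b :: bs) :
    Run ψ none (ψ a) [a] none := by
  have hstep : Step ψ none b ([] ++ [a]) (after ψ a 1) :=
    Step.boundary [] (by intro x hx; simp at hx) a b bs hab
  have := Run.cons hstep (run_after ψ a 1)
  simp only [List.nil_append, List.append_nil] at this
  have hdrop : (ψ a).drop 1 = bs := by rw [hab]; rfl
  rw [hdrop] at this
  rw [hab]
  exact this

lemma run_prepend_null {a : A} (ha : ψ a = []) {b : B} {v : List B} {w : List A} {q' : QS ψ}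
    (h : Run ψ none (b :: v) w q') : Run ψ none (b :: v) (a :: w) q' := by
  cases h with
  | cons hs hr =>
    cases hs with
    | boundary e he a2 b2 bs2 hab =>
      have hstep : Step ψ none b ((a :: e) ++ [a2]) (after ψ a2 1) :=
        Step.boundary (a :: e) (fun x hx => by
          rcases List.mem_cons.mp hx with h | h
          · subst h; exact ha
          · exact he x h) a2 b bs2 hab
      have := Run.cons hstep hr
      simpa using this

lemma run_flatMap : ∀ w : List A, ∃ w₁ t, w = w₁ ++ t ∧ NullW ψ t ∧
    Run ψ none (w.flatMap ψ) w₁ none := by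
  intro w
  induction w with
  | nil => exact ⟨[], [], rfl, fun x hx => absurd hx List.not_mem_nil, Run.nil none⟩
  | cons a w ih =>
    obtain ⟨w₁, t, hw, ht, hr⟩ := ih
    cases hab : ψ a with
    | nil =>
      cases w₁ with
      | nil =>
        refine ⟨[], a :: t, by simpa using hw, ?_, ?_⟩
        · intro x hx
          rcases List.mem_cons.mp hx with h | h
          · subst h; exact hab
          · exact ht x h
        · have hv : w.flatMap ψ = [] := by
            have := run_sound ψ hr rfl
            simpa [rem] using this
          simp [hab, hv]
          exact Run.nil none
      | cons x w₁' =>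
        cases hv : w.flatMap ψ with
        | nil => rw [hv] at hr; cases hr
        | cons b v =>
          rw [hv] at hr
          have := run_prepend_null ψ hab hr
          exact ⟨a :: x :: w₁', t, by simp [hw], ht, by simpa [hab, hv] using this⟩
    | cons b bs =>
      refine ⟨a :: w₁, t, by simp [hw], ht, ?_⟩
      have hblock := run_block ψ hab
      have := run_append ψ hblock hr
      simpa using this



open Symbol ContextFreeGrammar

variable {T : Type}

inductive DerivesIn (G : ContextFreeGrammar.{0} T) :
    List (Symbol T G.NT) → List (Symbol T G.NT) → ℕ → Prop
  | refl (u : List (Symbol T G.NT)) : DerivesIn G u u 0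
  | head {u v w : List (Symbol T G.NT)} {n : ℕ} :
      G.Produces u v → DerivesIn G v w n → DerivesIn G u w (n + 1)

lemma derivesIn_of_derives {G : ContextFreeGrammar.{0} T} {u v : List (Symbol T G.NT)}
    (h : G.Derives u v) : ∃ n, DerivesIn G u v n := by
  induction h using Relation.ReflTransGen.head_induction_on with
  | refl => exact ⟨0, DerivesIn.refl v⟩
  | head hp _ ih => obtain ⟨n, hn⟩ := ih; exact ⟨n + 1, DerivesIn.head hp hn⟩

lemma rewrites_append_inv {N : Type} {r : ContextFreeRule T N} :
    ∀ {α β v : List (Symbol T N)}, r.Rewrites (α ++ β) v →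
      (∃ α', r.Rewrites α α' ∧ v = α' ++ β) ∨ (∃ β', r.Rewrites β β' ∧ v = α ++ β') := by
  intro α
  induction α with
  | nil => intro β v h; exact Or.inr ⟨v, by simpa using h, by simp⟩
  | cons x α ih =>
    intro β v h
    rw [List.cons_append] at h
    cases h with
    | head s => exact Or.inl ⟨r.output ++ α, ContextFreeRule.Rewrites.head α, by simp⟩
    | cons y h =>
      rcases ih h with ⟨α', hα', rfl⟩ | ⟨β', hβ', rfl⟩
      · exact Or.inl ⟨x :: α', ContextFreeRule.Rewrites.cons x hα', by simp⟩
      · exact Or.inr ⟨β', hβ', by simp⟩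

lemma not_mem_map_terminal {N : Type} (X : N) (w : List T) :
    Symbol.nonterminal X ∉ w.map (Symbol.terminal : T → Symbol T N) := by
  intro h
  rcases List.mem_map.mp h with ⟨b, _, hb⟩
  cases hb

lemma derivesIn_terminal {G : ContextFreeGrammar.{0} T} {w : List T}
    {u : List (Symbol T G.NT)} {n : ℕ}
    (h : DerivesIn G (w.map Symbol.terminal) u n) : u = w.map Symbol.terminal := by
  cases h with
  | refl => rfl
  | head hp _ =>
    exfalso
    obtain ⟨r, _, hrw⟩ := hp
    obtain ⟨p, q, hu, -⟩ := hrw.exists_parts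
    exact not_mem_map_terminal r.input w (hu ▸ (by simp))

lemma derivesIn_nil {G : ContextFreeGrammar.{0} T} {w : List T} {n : ℕ}
    (h : DerivesIn G [] (w.map Symbol.terminal) n) : w = [] := by
  have := derivesIn_terminal (w := []) (by simpa using h)
  simpa using this.symm

lemma derivesIn_single_terminal {G : ContextFreeGrammar.{0} T} {t : T} {w : List T} {n : ℕ}
    (h : DerivesIn G [Symbol.terminal t] (w.map Symbol.terminal) n) : w = [t] := by
  have h1 : List.map (Symbol.terminal : T → Symbol T G.NT) w = [t].map Symbol.terminal :=
    derivesIn_terminal (w := [t]) (by simpa using h)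
  exact List.map_injective_iff.mpr (fun x y hxy => Symbol.terminal.inj hxy) h1

lemma derivesIn_append_split' {G : ContextFreeGrammar.{0} T} :
    ∀ {n : ℕ} {u x : List (Symbol T G.NT)},
      DerivesIn G u x n → ∀ α β, u = α ++ β →
      ∃ x₁ x₂ n₁ n₂, x = x₁ ++ x₂ ∧ n₁ + n₂ = n ∧
        DerivesIn G α x₁ n₁ ∧ DerivesIn G β x₂ n₂ := by
  intro n u x h
  induction h with
  | refl u =>
    intro α β hu
    exact ⟨α, β, 0, 0, hu, rfl, DerivesIn.refl _, DerivesIn.refl _⟩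
  | head hp hd ih =>
    intro α β hu
    subst hu
    obtain ⟨r, hrmem, hrw⟩ := hp
    rcases rewrites_append_inv hrw with ⟨α', hα', rfl⟩ | ⟨β', hβ', rfl⟩
    · obtain ⟨x₁, x₂, n₁, n₂, hx, hn, h₁, h₂⟩ := ih α' β rfl
      exact ⟨x₁, x₂, n₁ + 1, n₂, hx, by omega, DerivesIn.head ⟨r, hrmem, hα'⟩ h₁, h₂⟩
    · obtain ⟨x₁, x₂, n₁, n₂, hx, hn, h₁, h₂⟩ := ih α β' rfl
      exact ⟨x₁, x₂, n₁, n₂ + 1, hx, by omega, h₁, DerivesIn.head ⟨r, hrmem, hβ'⟩ h₂⟩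

lemma derivesIn_append_split {G : ContextFreeGrammar.{0} T} {n : ℕ}
    {u : List (Symbol T G.NT)} {w : List T}
    (h : DerivesIn G u (w.map Symbol.terminal) n) (α β : List (Symbol T G.NT))
    (hu : u = α ++ β) :
    ∃ w₁ w₂ n₁ n₂, w = w₁ ++ w₂ ∧ n₁ + n₂ = n ∧
      DerivesIn G α (w₁.map Symbol.terminal) n₁ ∧ DerivesIn G β (w₂.map Symbol.terminal) n₂ := by
  obtain ⟨x₁, x₂, n₁, n₂, hx, hn, h₁, h₂⟩ := derivesIn_append_split' h α β hu
  rcases List.map_eq_append_iff.mp hx with ⟨w₁, w₂, rfl, hw₁, hw₂⟩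
  exact ⟨w₁, w₂, n₁, n₂, rfl, hn, hw₁ ▸ h₁, hw₂ ▸ h₂⟩

lemma derivesIn_nt_inv {G : ContextFreeGrammar.{0} T} {X : G.NT} {w : List T} {n : ℕ}
    (h : DerivesIn G [Symbol.nonterminal X] (w.map Symbol.terminal) n) :
    ∃ r ∈ G.rules, r.input = X ∧ ∃ m, m + 1 = n ∧
      DerivesIn G r.output (w.map Symbol.terminal) m := by
  generalize hx : w.map (Symbol.terminal : T → Symbol T G.NT) = x at h
  cases h with
  | refl =>
    exfalso
    exact not_mem_map_terminal X w (by rw [hx]; exact List.mem_singleton_self _)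
  | head hp hd =>
    subst hx
    obtain ⟨r, hrmem, hrw⟩ := hp
    obtain ⟨p, q, hu, hv⟩ := hrw.exists_parts
    have hp0 : p = [] ∧ q = [] ∧ Symbol.nonterminal r.input = (Symbol.nonterminal X : Symbol T G.NT) := by
      cases p with
      | nil =>
        cases q with
        | nil => simpa using hu.symm
        | cons y ys => simp at hu
      | cons y ys =>
        exfalso
        have hlen := congrArg List.length hu
        simp only [List.length_cons, List.length_append, List.length_singleton] at hlen
        omega
    obtain ⟨rfl, rfl, hX⟩ := hp0
    refine ⟨r, hrmem, Symbol.nonterminal.inj hX, _, rfl, ?_⟩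
    rw [hv] at hd
    simpa using hd

lemma derives_append {G : ContextFreeGrammar.{0} T} {u₁ u₂ v₁ v₂ : List (Symbol T G.NT)}
    (h₁ : G.Derives u₁ v₁) (h₂ : G.Derives u₂ v₂) : G.Derives (u₁ ++ u₂) (v₁ ++ v₂) :=
  (h₁.append_right u₂).trans (h₂.append_left v₁)


section Construction

variable {A B : Type} [Fintype A] (ψ : A → List B) (g : ContextFreeGrammar.{0} B)

abbrev NTt : Type := Option ((QS ψ × (g.NT ⊕ B) × QS ψ) ⊕ Unit)

def tripSym (q : QS ψ) (s : g.NT ⊕ B) (q' : QS ψ) : NTt ψ g := some (Sum.inl (q, s, q'))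

def EeN : NTt ψ g := some (Sum.inr ())

def cnv : Symbol B g.NT → g.NT ⊕ B
  | .terminal b => .inr b
  | .nonterminal n => .inl n

def chain : QS ψ → List (Symbol B g.NT) → List (QS ψ) → List (Symbol A (NTt ψ g))
  | _, [], _ => []
  | _, _ :: _, [] => []
  | q, s :: ss, q' :: qs => .nonterminal (tripSym ψ g q (cnv g s) q') :: chain q' ss qs

def lastQ : QS ψ → List (QS ψ) → QS ψ
  | q, [] => q
  | _, q' :: qs => lastQ q' qs

lemma lastQ_append (q : QS ψ) (l₁ l₂ : List (QS ψ)) :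
    lastQ ψ q (l₁ ++ l₂) = lastQ ψ (lastQ ψ q l₁) l₂ := by
  induction l₁ generalizing q with
  | nil => rfl
  | cons x l₁ ih => simp [lastQ, ih]

lemma chain_append (γ₁ γ₂ : List (Symbol B g.NT)) (qs₁ qs₂ : List (QS ψ)) (q : QS ψ)
    (h : qs₁.length = γ₁.length) :
    chain ψ g q (γ₁ ++ γ₂) (qs₁ ++ qs₂) =
      chain ψ g q γ₁ qs₁ ++ chain ψ g (lastQ ψ q qs₁) γ₂ qs₂ := by
  induction γ₁ generalizing q qs₁ with
  | nil =>
    rw [List.length_nil, List.length_eq_zero_iff] at h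
    subst h
    simp [chain, lastQ]
  | cons s γ₁ ih =>
    cases qs₁ with
    | nil => simp at h
    | cons q₁ qs₁ =>
      simp only [List.cons_append, chain, lastQ]
      have := ih qs₁ q₁ (by simpa using h)
      rw [this]

noncomputable def listQ : List (QS ψ) :=
  none :: (Finset.univ : Finset A).toList.flatMap
    (fun a => (List.finRange (ψ a).length).map fun i => some ⟨a, i⟩)

lemma mem_listQ (q : QS ψ) : q ∈ listQ ψ := by
  cases q with
  | none => exact List.mem_cons_self
  | some x =>
    rcases x with ⟨a, i⟩
    refine List.mem_cons_of_mem _ (List.mem_flatMap.mpr ⟨a, ?_, ?_⟩)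
    · rw [Finset.mem_toList]; exact Finset.mem_univ a
    · exact List.mem_map.mpr ⟨i, List.mem_finRange i, rfl⟩

noncomputable def allLists (n : ℕ) : List (List (QS ψ)) :=
  Nat.rec [[]] (fun _ ih => (listQ ψ).flatMap fun q => ih.map fun l => q :: l) n

lemma allLists_zero : allLists ψ 0 = [[]] := rfl

lemma allLists_succ (n : ℕ) :
    allLists ψ (n + 1) = (listQ ψ).flatMap fun q => (allLists ψ n).map fun l => q :: l := rfl

lemma mem_allLists : ∀ (n : ℕ) (l : List (QS ψ)), l.length = n → l ∈ allLists ψ n := by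
  intro n
  induction n with
  | zero => intro l hl; rw [List.length_eq_zero_iff] at hl; rw [hl, allLists_zero]; simp
  | succ n ih =>
    intro l hl
    cases l with
    | nil => simp at hl
    | cons q l =>
      rw [allLists_succ]
      exact List.mem_flatMap.mpr ⟨q, mem_listQ ψ q,
        List.mem_map.mpr ⟨l, ih l (by simpa using hl), rfl⟩⟩

lemma length_of_mem_allLists : ∀ (n : ℕ) (l : List (QS ψ)), l ∈ allLists ψ n → l.length = n := by
  intro n
  induction n with
  | zero => intro l hl; rw [allLists_zero] at hl; simp at hl; simp [hl]
  | succ n ih =>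
    intro l hl
    rw [allLists_succ] at hl
    simp only [List.mem_flatMap, List.mem_map] at hl
    obtain ⟨q, -, l', hl', rfl⟩ := hl
    simp [ih l' hl']

def startRule : ContextFreeRule A (NTt ψ g) :=
  ⟨none, [.nonterminal (tripSym ψ g none (.inl g.initial) none), .nonterminal (EeN ψ g)]⟩

def eNilRule : ContextFreeRule A (NTt ψ g) := ⟨EeN ψ g, []⟩

def eConsRule (a : A) : ContextFreeRule A (NTt ψ g) :=
  ⟨EeN ψ g, [.terminal a, .nonterminal (EeN ψ g)]⟩

def bRule (a : A) (b : B) : ContextFreeRule A (NTt ψ g) :=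
  ⟨tripSym ψ g none (.inr b) (after ψ a 1), [.nonterminal (EeN ψ g), .terminal a]⟩

def mRule (a : A) (i : Fin (ψ a).length) : ContextFreeRule A (NTt ψ g) :=
  ⟨tripSym ψ g (some ⟨a, i⟩) (.inr ((ψ a).get i)) (after ψ a (↑i + 1)), []⟩

def gRule (r : ContextFreeRule B g.NT) (q : QS ψ) (qs : List (QS ψ)) :
    ContextFreeRule A (NTt ψ g) :=
  ⟨tripSym ψ g q (.inl r.input) (lastQ ψ q qs), chain ψ g q r.output qs⟩

def letterRules (a : A) : List (ContextFreeRule A (NTt ψ g)) :=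
  List.casesOn (ψ a) [eConsRule ψ g a] (fun b _ => [bRule ψ g a b])

noncomputable def rulesList : List (ContextFreeRule A (NTt ψ g)) :=
  startRule ψ g :: eNilRule ψ g ::
    ((Finset.univ : Finset A).toList.flatMap (letterRules ψ g)
    ++ (Finset.univ : Finset A).toList.flatMap
        (fun a => (List.finRange (ψ a).length).map fun i => mRule ψ g a i)
    ++ (listQ ψ).flatMap fun q => g.rules.toList.flatMap fun r =>
        (allLists ψ r.output.length).map fun qs => gRule ψ g r q qs)

noncomputable def gInv : ContextFreeGrammar.{0} A :=
  ⟨NTt ψ g, none, @List.toFinset _ (Classical.decEq _) (rulesList ψ g)⟩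

lemma mem_gInv_rules_iff (r' : ContextFreeRule A (NTt ψ g)) :
    r' ∈ (gInv ψ g).rules ↔ r' ∈ rulesList ψ g :=
  @List.mem_toFinset _ (Classical.decEq _) _ _

-- Completeness side ---------------------------------------------------------

lemma e_complete {e : List A} (he : NullW ψ e) :
    (gInv ψ g).Derives [Symbol.nonterminal (EeN ψ g)] (e.map Symbol.terminal) := by
  induction e with
  | nil =>
    have hm : eNilRule ψ g ∈ (gInv ψ g).rules := by
      rw [mem_gInv_rules_iff]; simp [rulesList]
    exact (ContextFreeGrammar.Produces.single
      ⟨eNilRule ψ g, hm, ContextFreeRule.Rewrites.input_output⟩)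
  | cons a e ih =>
    have ha : ψ a = [] := he a (by simp)
    have hm : eConsRule ψ g a ∈ (gInv ψ g).rules := by
      rw [mem_gInv_rules_iff]
      simp only [rulesList, List.mem_cons, List.mem_append, List.mem_flatMap]
      refine Or.inr (Or.inr (Or.inl (Or.inl ⟨a, by simp, ?_⟩)))
      rw [letterRules, ha]
      simp
    have h1 : (gInv ψ g).Produces [Symbol.nonterminal (EeN ψ g)]
        [Symbol.terminal a, Symbol.nonterminal (EeN ψ g)] :=
      ⟨eConsRule ψ g a, hm, ContextFreeRule.Rewrites.input_output⟩
    have h2 := (ih (fun x hx => he x (by simp [hx]))).append_left [Symbol.terminal a]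
    exact h1.trans_derives (by simpa using h2)

lemma step_complete {q : QS ψ} {b : B} {w : List A} {q' : QS ψ} (h : Step ψ q b w q') :
    (gInv ψ g).Derives [Symbol.nonterminal (tripSym ψ g q (.inr b) q')]
      (w.map Symbol.terminal) := by
  cases h with
  | boundary e he a b bs hab =>
    have hm : bRule ψ g a b ∈ (gInv ψ g).rules := by
      rw [mem_gInv_rules_iff]
      simp only [rulesList, List.mem_cons, List.mem_append, List.mem_flatMap]
      refine Or.inr (Or.inr (Or.inl (Or.inl ⟨a, by simp, ?_⟩)))
      rw [letterRules, hab]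
      simp
    have h1 : (gInv ψ g).Produces [Symbol.nonterminal (tripSym ψ g none (.inr b) (after ψ a 1))]
        [Symbol.nonterminal (EeN ψ g), Symbol.terminal a] :=
      ⟨bRule ψ g a b, hm, ContextFreeRule.Rewrites.input_output⟩
    have h2 := (e_complete ψ g he).append_right [Symbol.terminal a]
    refine h1.trans_derives ?_
    simpa using h2
  | mid a i =>
    have hm : mRule ψ g a i ∈ (gInv ψ g).rules := by
      rw [mem_gInv_rules_iff]
      simp only [rulesList, List.mem_cons, List.mem_append, List.mem_flatMap, List.mem_map]
      exact Or.inr (Or.inr (Or.inl (Or.inr ⟨a, by simp, i, List.mem_finRange i, rfl⟩)))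
    exact ContextFreeGrammar.Produces.single
      ⟨mRule ψ g a i, hm, ContextFreeRule.Rewrites.input_output⟩

lemma run_chain_derives {q : QS ψ} {v : List B} {w : List A} {q' : QS ψ}
    (h : Run ψ q v w q') :
    ∃ qs : List (QS ψ), qs.length = v.length ∧ lastQ ψ q qs = q' ∧
      (gInv ψ g).Derives (chain ψ g q (v.map Symbol.terminal) qs) (w.map Symbol.terminal) := by
  induction h with
  | nil q => exact ⟨[], rfl, rfl, ContextFreeGrammar.Derives.refl _⟩
  | cons hs hr ih =>
    rename_i q b w₁ q₁ v w₂ q''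
    obtain ⟨qs, hlen, hlast, hd⟩ := ih
    refine ⟨q₁ :: qs, by simp [hlen], by simpa [lastQ] using hlast, ?_⟩
    have h1 := step_complete ψ g hs
    have := derives_append h1 hd
    rw [List.map_append]
    exact this

lemma derives_chain {α β : List (Symbol B g.NT)} (hd : g.Derives α β) :
    ∀ (qs : List (QS ψ)) (q₀ : QS ψ), qs.length = β.length →
      ∃ ps : List (QS ψ), ps.length = α.length ∧ lastQ ψ q₀ ps = lastQ ψ q₀ qs ∧
        (gInv ψ g).Derives (chain ψ g q₀ α ps) (chain ψ g q₀ β qs) := by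
  induction hd using Relation.ReflTransGen.head_induction_on with
  | refl => intro qs q₀ hlen; exact ⟨qs, hlen, rfl, ContextFreeGrammar.Derives.refl _⟩
  | head hp hd ih =>
    rename_i α α'
    intro qs q₀ hlen
    obtain ⟨ps', hlen', hlast', hd'⟩ := ih qs q₀ hlen
    obtain ⟨r, hrmem, hrw⟩ := hp
    obtain ⟨p, t, hα, hα'⟩ := hrw.exists_parts
    subst hα hα'
    have hlenps' : ps'.length = p.length + (r.output.length + t.length) := by
      have := hlen'; simp at this; omega
    obtain ⟨ps'p, rest0, rfl, hlp, hlrest⟩ :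
        ∃ l1 l2, ps' = l1 ++ l2 ∧ l1.length = p.length ∧
          l2.length = r.output.length + t.length :=
      ⟨ps'.take p.length, ps'.drop p.length, (List.take_append_drop _ _).symm,
        by simp; omega, by simp; omega⟩
    obtain ⟨psmid, pst, rfl, hlm, hlt⟩ :
        ∃ l1 l2, rest0 = l1 ++ l2 ∧ l1.length = r.output.length ∧ l2.length = t.length :=
      ⟨rest0.take r.output.length, rest0.drop r.output.length,
        (List.take_append_drop _ _).symm, by simp; omega, by simp; omega⟩
    refine ⟨ps'p ++ [lastQ ψ (lastQ ψ q₀ ps'p) psmid] ++ pst, ?_, ?_, ?_⟩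
    · simp only [List.length_append, List.length_cons, List.length_nil]
      omega
    · rw [← hlast']
      simp only [List.append_assoc, List.cons_append, List.nil_append,
        List.singleton_append, lastQ_append, lastQ, List.append_eq]
    · have hchain1 : chain ψ g q₀ (p ++ [Symbol.nonterminal r.input] ++ t)
          (ps'p ++ [lastQ ψ (lastQ ψ q₀ ps'p) psmid] ++ pst)
          = chain ψ g q₀ p ps'p ++
            ([Symbol.nonterminal (tripSym ψ g (lastQ ψ q₀ ps'p) (.inl r.input)
              (lastQ ψ (lastQ ψ q₀ ps'p) psmid))] ++
             chain ψ g (lastQ ψ (lastQ ψ q₀ ps'p) psmid) t pst) := by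
        rw [List.append_assoc, List.append_assoc, chain_append ψ g p _ ps'p _ q₀ hlp,
          chain_append ψ g [Symbol.nonterminal r.input] t
            [lastQ ψ (lastQ ψ q₀ ps'p) psmid] pst (lastQ ψ q₀ ps'p) rfl]
        simp only [lastQ, chain, cnv]
      have hchain2 : chain ψ g q₀ (p ++ r.output ++ t) (ps'p ++ (psmid ++ pst))
          = chain ψ g q₀ p ps'p ++
            (chain ψ g (lastQ ψ q₀ ps'p) r.output psmid ++
             chain ψ g (lastQ ψ (lastQ ψ q₀ ps'p) psmid) t pst) := by
        rw [List.append_assoc, chain_append ψ g p _ ps'p _ q₀ hlp,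
          chain_append ψ g r.output t psmid pst (lastQ ψ q₀ ps'p) hlm]
      have hprod : (gInv ψ g).Produces
          (chain ψ g q₀ p ps'p ++
            ([Symbol.nonterminal (tripSym ψ g (lastQ ψ q₀ ps'p) (.inl r.input)
              (lastQ ψ (lastQ ψ q₀ ps'p) psmid))] ++
             chain ψ g (lastQ ψ (lastQ ψ q₀ ps'p) psmid) t pst))
          (chain ψ g q₀ p ps'p ++
            (chain ψ g (lastQ ψ q₀ ps'p) r.output psmid ++
             chain ψ g (lastQ ψ (lastQ ψ q₀ ps'p) psmid) t pst)) := by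
        have hmem : gRule ψ g r (lastQ ψ q₀ ps'p) psmid ∈ (gInv ψ g).rules := by
          rw [mem_gInv_rules_iff]
          simp only [rulesList, List.mem_cons, List.mem_append, List.mem_flatMap, List.mem_map]
          exact Or.inr (Or.inr (Or.inr ⟨lastQ ψ q₀ ps'p, mem_listQ ψ _,
            r, Finset.mem_toList.mpr hrmem, psmid, mem_allLists ψ _ _ hlm, rfl⟩))
        refine ⟨gRule ψ g r (lastQ ψ q₀ ps'p) psmid, hmem, ?_⟩
        have := ContextFreeRule.rewrites_of_exists_parts (gRule ψ g r (lastQ ψ q₀ ps'p) psmid)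
          (chain ψ g q₀ p ps'p)
          (chain ψ g (lastQ ψ (lastQ ψ q₀ ps'p) psmid) t pst)
        simp [gRule, List.append_assoc] at this ⊢
        exact this
      rw [hchain1]
      rw [hchain2] at hd'
      exact hprod.trans_derives hd'

lemma triple_complete {Y : g.NT} {v : List B} {w : List A} {q q' : QS ψ}
    (hgd : g.Derives [Symbol.nonterminal Y] (v.map Symbol.terminal))
    (hr : Run ψ q v w q') :
    (gInv ψ g).Derives [Symbol.nonterminal (tripSym ψ g q (.inl Y) q')]
      (w.map Symbol.terminal) := by
  obtain ⟨qs, hlen, hlast, hd2⟩ := run_chain_derives ψ g hr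
  obtain ⟨ps, hlenps, hlastps, hd1⟩ := derives_chain ψ g hgd qs q (by simp [hlen])
  have : ∃ p, ps = [p] := by
    cases ps with
    | nil => simp at hlenps
    | cons p ps' =>
      cases ps' with
      | nil => exact ⟨p, rfl⟩
      | cons _ _ => simp at hlenps
  obtain ⟨p, rfl⟩ := this
  have hp : p = q' := by
    rw [← hlast, ← hlastps]; rfl
  subst hp
  have : chain ψ g q [Symbol.nonterminal Y] [p] =
      [Symbol.nonterminal (tripSym ψ g q (.inl Y) p)] := rfl
  rw [this] at hd1
  exact hd1.trans hd2

end Construction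

section Soundness

variable {A B : Type} [Fintype A] (ψ : A → List B) (g : ContextFreeGrammar.{0} B)

lemma rulesList_inv {r' : ContextFreeRule A (NTt ψ g)} (hr : r' ∈ rulesList ψ g) :
    r' = startRule ψ g ∨ r' = eNilRule ψ g ∨
    (∃ a, ψ a = [] ∧ r' = eConsRule ψ g a) ∨
    (∃ a b bs, ψ a = b :: bs ∧ r' = bRule ψ g a b) ∨
    (∃ a i, r' = mRule ψ g a i) ∨
    (∃ q₀ r qs, r ∈ g.rules ∧ qs.length = r.output.length ∧ r' = gRule ψ g r q₀ qs) := by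
  simp only [rulesList, List.mem_cons, List.mem_append, List.mem_flatMap, List.mem_map] at hr
  rcases hr with rfl | rfl | ⟨⟨a, -, h⟩ | ⟨a, -, i, -, rfl⟩⟩ | ⟨q₀, -, r, hrmem, qs, hqs, rfl⟩
  · exact Or.inl rfl
  · exact Or.inr (Or.inl rfl)
  · cases hab : ψ a with
    | nil =>
      rw [letterRules, hab] at h
      simp only [List.mem_singleton] at h
      exact Or.inr (Or.inr (Or.inl ⟨a, hab, h⟩))
    | cons b bs =>
      rw [letterRules, hab] at h
      simp only [List.mem_singleton] at h
      exact Or.inr (Or.inr (Or.inr (Or.inl ⟨a, b, bs, hab, h⟩)))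
  · exact Or.inr (Or.inr (Or.inr (Or.inr (Or.inl ⟨a, i, rfl⟩))))
  · exact Or.inr (Or.inr (Or.inr (Or.inr (Or.inr
      ⟨q₀, r, qs, Finset.mem_toList.mp hrmem, length_of_mem_allLists ψ _ _ hqs, rfl⟩))))

lemma sound_main : ∀ n : ℕ,
    (∀ w : List A, DerivesIn (gInv ψ g) [Symbol.nonterminal (EeN ψ g)]
        (w.map Symbol.terminal) n → NullW ψ w) ∧
    (∀ (q : QS ψ) (s : g.NT ⊕ B) (q' : QS ψ) (w : List A),
      DerivesIn (gInv ψ g) [Symbol.nonterminal (tripSym ψ g q s q')]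
        (w.map Symbol.terminal) n →
      (∀ Y, s = Sum.inl Y →
        ∃ v, g.Derives [Symbol.nonterminal Y] (v.map Symbol.terminal) ∧ Run ψ q v w q') ∧
      (∀ b, s = Sum.inr b → Run ψ q [b] w q')) := by
  intro n
  induction n using Nat.strong_induction_on with
  | _ n ih =>
    constructor
    · -- E soundness
      intro w h
      obtain ⟨r', hmem, hinput, m, hm, hout⟩ := derivesIn_nt_inv h
      rcases rulesList_inv ψ g ((mem_gInv_rules_iff ψ g r').mp hmem) with
        rfl | rfl | ⟨a, ha, rfl⟩ | ⟨a, b, bs, hab, rfl⟩ | ⟨a, i, rfl⟩ |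
        ⟨q₀, r, qs, hrmem, hqs, rfl⟩
      · cases hinput
      · have hw : w = [] := derivesIn_nil hout
        subst hw
        intro x hx; simp at hx
      · obtain ⟨w₁, w₂, m₁, m₂, rfl, hmn, h₁, h₂⟩ :=
          derivesIn_append_split hout [Symbol.terminal a] [Symbol.nonterminal (EeN ψ g)] rfl
        have hw₁ : w₁ = [a] := derivesIn_single_terminal h₁
        have hw₂ : NullW ψ w₂ := (ih m₂ (by omega)).1 w₂ h₂
        subst hw₁
        intro x hx
        rcases List.mem_append.mp hx with hx | hx
        · rw [List.mem_singleton.mp hx]; exact ha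
        · exact hw₂ x hx
      · cases hinput
      · cases hinput
      · cases hinput
    · -- triple soundness
      intro q s q' w h
      obtain ⟨r', hmem, hinput, m, hm, hout⟩ := derivesIn_nt_inv h
      rcases rulesList_inv ψ g ((mem_gInv_rules_iff ψ g r').mp hmem) with
        rfl | rfl | ⟨a, ha, rfl⟩ | ⟨a, b, bs, hab, rfl⟩ | ⟨a, i, rfl⟩ |
        ⟨q₀, r, qs, hrmem, hqs, rfl⟩
      · cases hinput
      · cases hinput
      · cases hinput
      · -- boundary rule
        obtain ⟨rfl, rfl, rfl⟩ : (none : QS ψ) = q ∧ (Sum.inr b : g.NT ⊕ B) = s ∧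
            after ψ a 1 = q' := by
          have h3 := Sum.inl.inj (Option.some.inj hinput)
          exact ⟨congrArg Prod.fst h3, congrArg (Prod.fst ∘ Prod.snd) h3,
            congrArg (Prod.snd ∘ Prod.snd) h3⟩
        obtain ⟨w₁, w₂, m₁, m₂, rfl, hmn, h₁, h₂⟩ :=
          derivesIn_append_split hout [Symbol.nonterminal (EeN ψ g)] [Symbol.terminal a] rfl
        have he : NullW ψ w₁ := (ih m₁ (by omega)).1 w₁ h₁
        have hw₂ : w₂ = [a] := derivesIn_single_terminal h₂
        subst hw₂
        constructor
        · intro Y hY; simp at hY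
        · intro b' hb'
          obtain rfl : b = b' := Sum.inr.inj hb'
          have := Run.cons (Step.boundary w₁ he a b bs hab) (Run.nil (ψ := ψ) (after ψ a 1))
          simpa using this
      · -- mid rule
        obtain ⟨rfl, rfl, rfl⟩ : (some ⟨a, i⟩ : QS ψ) = q ∧
            (Sum.inr ((ψ a).get i) : g.NT ⊕ B) = s ∧ after ψ a (↑i + 1) = q' := by
          have h3 := Sum.inl.inj (Option.some.inj hinput)
          exact ⟨congrArg Prod.fst h3, congrArg (Prod.fst ∘ Prod.snd) h3,
            congrArg (Prod.snd ∘ Prod.snd) h3⟩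
        have hw : w = [] := derivesIn_nil hout
        subst hw
        constructor
        · intro Y hY; simp at hY
        · intro b' hb'
          obtain rfl : (ψ a).get i = b' := Sum.inr.inj hb'
          exact Run.cons (Step.mid a i) (Run.nil _)
      · -- grammar rule
        obtain ⟨rfl, rfl, rfl⟩ : q₀ = q ∧ (Sum.inl r.input : g.NT ⊕ B) = s ∧
            lastQ ψ q₀ qs = q' := by
          have h3 := Sum.inl.inj (Option.some.inj hinput)
          exact ⟨congrArg Prod.fst h3, congrArg (Prod.fst ∘ Prod.snd) h3,
            congrArg (Prod.snd ∘ Prod.snd) h3⟩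
        have chainLem : ∀ (γ : List (Symbol B g.NT)) (qs : List (QS ψ)) (qq : QS ψ)
            (w : List A) (m : ℕ), m < n → qs.length = γ.length →
            DerivesIn (gInv ψ g) (chain ψ g qq γ qs) (w.map Symbol.terminal) m →
            ∃ v, g.Derives γ (v.map Symbol.terminal) ∧ Run ψ qq v w (lastQ ψ qq qs) := by
          intro γ
          induction γ with
          | nil =>
            intro qs qq w m hmn hlen hder
            have hq0 : qs = [] := List.length_eq_zero_iff.mp (by simpa using hlen)
            subst hq0
            have hw : w = [] := derivesIn_nil hder
            subst hw
            exact ⟨[], ContextFreeGrammar.Derives.refl _, Run.nil qq⟩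
          | cons sγ γ ihγ =>
            intro qs qq w m hmn hlen hder
            cases qs with
            | nil => simp at hlen
            | cons q₁ qs =>
              obtain ⟨w₁, w₂, m₁, m₂, rfl, hmm, h₁, h₂⟩ :=
                derivesIn_append_split hder
                  [Symbol.nonterminal (tripSym ψ g qq (cnv g sγ) q₁)] (chain ψ g q₁ γ qs) rfl
              have hm₁ : m₁ < n := by omega
              have hm₂ : m₂ < n := by omega
              obtain ⟨v₂, hdv₂, hrun₂⟩ := ihγ qs q₁ w₂ m₂ hm₂ (by simpa using hlen) h₂
              cases sγ with
              | terminal b =>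
                have hrun₁ := ((ih m₁ hm₁).2 qq _ q₁ w₁ h₁).2 b rfl
                refine ⟨b :: v₂, ?_, ?_⟩
                · have := derives_append
                    (ContextFreeGrammar.Derives.refl [Symbol.terminal b]) hdv₂
                  simpa using this
                · have := run_append ψ hrun₁ hrun₂
                  simpa [lastQ] using this
              | nonterminal Y =>
                obtain ⟨v₁, hdv₁, hrun₁⟩ := ((ih m₁ hm₁).2 qq _ q₁ w₁ h₁).1 Y rfl
                refine ⟨v₁ ++ v₂, ?_, ?_⟩
                · have := derives_append hdv₁ hdv₂
                  simpa using this
                · have := run_append ψ hrun₁ hrun₂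
                  simpa [lastQ] using this
        constructor
        · intro Y hY
          obtain rfl : r.input = Y := Sum.inl.inj hY
          obtain ⟨v, hdv, hrv⟩ := chainLem r.output qs q₀ w m (by omega) hqs hout
          refine ⟨v, ?_, hrv⟩
          exact ContextFreeGrammar.Produces.trans_derives
            ⟨r, hrmem, ContextFreeRule.Rewrites.input_output⟩ hdv
        · intro b hb; simp at hb

lemma gInv_language : (gInv ψ g).language = { w : List A | w.flatMap ψ ∈ g.language } := by
  ext w
  constructor
  · intro hw
    rw [ContextFreeGrammar.mem_language_iff] at hw
    obtain ⟨n, hn⟩ := derivesIn_of_derives hw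
    obtain ⟨r', hmem, hinput, m, hm, hout⟩ := derivesIn_nt_inv hn
    rcases rulesList_inv ψ g ((mem_gInv_rules_iff ψ g r').mp hmem) with
      rfl | rfl | ⟨a, ha, rfl⟩ | ⟨a, b, bs, hab, rfl⟩ | ⟨a, i, rfl⟩ |
      ⟨q₀, r, qs, hrmem, hqs, rfl⟩
    · obtain ⟨w₁, w₂, m₁, m₂, rfl, hmn, h₁, h₂⟩ := derivesIn_append_split hout
        [Symbol.nonterminal (tripSym ψ g none (.inl g.initial) none)]
        [Symbol.nonterminal (EeN ψ g)] rfl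
      obtain ⟨v, hdv, hrv⟩ := ((sound_main ψ g m₁).2 none _ none w₁ h₁).1 g.initial rfl
      have hw₂ : NullW ψ w₂ := (sound_main ψ g m₂).1 w₂ h₂
      have hv : v = (w₁.flatMap ψ) := by
        have := run_sound ψ hrv rfl
        simpa [rem] using this
      subst hv
      show (w₁ ++ w₂).flatMap ψ ∈ g.language
      rw [List.flatMap_append, nullW_flatMap hw₂, List.append_nil]
      rw [ContextFreeGrammar.mem_language_iff]
      exact hdv
    · cases hinput
    · cases hinput
    · cases hinput
    · cases hinput
    · cases hinput
  · intro hw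
    have hw' : (w.flatMap ψ) ∈ g.language := hw
    rw [ContextFreeGrammar.mem_language_iff] at hw'
    obtain ⟨w₁, t, rfl, ht, hrun⟩ := run_flatMap ψ w
    have h1 := triple_complete ψ g hw' hrun
    have h2 := e_complete ψ g ht
    have hmem : startRule ψ g ∈ (gInv ψ g).rules := by
      rw [mem_gInv_rules_iff]; simp [rulesList]
    have hstart : (gInv ψ g).Produces [Symbol.nonterminal (gInv ψ g).initial]
        [Symbol.nonterminal (tripSym ψ g none (.inl g.initial) none),
         Symbol.nonterminal (EeN ψ g)] :=
      ⟨startRule ψ g, hmem, ContextFreeRule.Rewrites.input_output⟩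
    rw [ContextFreeGrammar.mem_language_iff]
    refine hstart.trans_derives ?_
    have := derives_append h1 h2
    simpa using this

end Soundness

end InvHomCF

/-- Context-free languages are closed under inverse images of monoid homomorphisms
between free monoids induced by a set map `ψ : A → B*`. -/
theorem stmt2 {A B : Type} [Fintype A] [Fintype B] (ψ : A → List B)
    (L : Language B) (hL : L.IsContextFree) :
    Language.IsContextFree { w : List A | w.flatMap ψ ∈ L } := by
  obtain ⟨g, rfl⟩ := hL
  exact ⟨InvHomCF.gInv ψ g, InvHomCF.gInv_language ψ g⟩
end

section
/- There exists an unambiguous context-free grammar generating the language of all words over {a_1,...,a_n, a_1^{-1},...,a_n^{-1}} that represent the identity in the free group F_n. Concretely, the grammar with non-terminals S, A_i, Ā_i (for i = 1,...,n), initial symbol S, and productions S → ε | a_j Ā_j S | ā_j A_j S, A_i → a_i | ā_i A_i A_i | a_j Ā_j A_i (j ≠ i) | ā_j A_j A_i, Ā_i → ā_i | a_i Ā_i Ā_i | a_j Ā_j Ā_i | ā_j A_j Ā_i (j ≠ i), generates exactly L(1) and is unambiguous. -/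
open ContextFreeGrammar

instance {T N : Type} [DecidableEq T] [DecidableEq N] :
    DecidableEq (ContextFreeRule T N) := fun a b =>
  decidable_of_iff (a.input = b.input ∧ a.output = b.output)
    (by cases a; cases b; simp)

/-- The formal inverse of a letter: `(i, b)` stands for `aᵢ` if `b = true` and for
`aᵢ⁻¹` if `b = false`. -/
def letterInv {n : ℕ} (c : Fin n × Bool) : Fin n × Bool := (c.1, !c.2)

/-- Nonterminals: `none` is the initial symbol `S`; `some t` is the nonterminal `N_t`
(`A_i` when `t = aᵢ`, `Ā_i` when `t = aᵢ⁻¹`) that derives exactly the words evaluating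
to the letter `t` with no proper initial segment evaluating to `t`. -/
abbrev TrivNT (n : ℕ) : Type := Option (Fin n × Bool)

/-- The production rules `S → ε`, `S → c N_{c⁻¹} S` (for every letter `c`),
`N_t → t`, and `N_t → c N_{c⁻¹} N_t` (for every letter `c ≠ t`); this is exactly the
grammar `S → ε | a_j Ā_j S | ā_j A_j S`, `A_i → a_i | ā_i A_i A_i | a_j Ā_j A_i (j ≠ i)
| ā_j A_j A_i`, `Ā_i → ā_i | a_i Ā_i Ā_i | a_j Ā_j Ā_i | ā_j A_j Ā_i (j ≠ i)`. -/
noncomputable def trivRules (n : ℕ) : List (ContextFreeRule (Fin n × Bool) (TrivNT n)) :=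
  [(⟨none, []⟩ : ContextFreeRule (Fin n × Bool) (TrivNT n))] ++
    ((Finset.univ : Finset (Fin n × Bool)).toList.map fun c =>
      ⟨none, [Symbol.terminal c, Symbol.nonterminal (some (letterInv c)),
        Symbol.nonterminal none]⟩) ++
    ((Finset.univ : Finset (Fin n × Bool)).toList.map fun t =>
      ⟨some t, [Symbol.terminal t]⟩) ++
    (((Finset.univ : Finset ((Fin n × Bool) × (Fin n × Bool)))).toList.filterMap
      fun tc =>
        if tc.2 = tc.1 then none else
          some ⟨some tc.1, [Symbol.terminal tc.2,
            Symbol.nonterminal (some (letterInv tc.2)), Symbol.nonterminal (some tc.1)]⟩)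

/-- The grammar of the paper for the language of all words representing `1 ∈ Fₙ`. -/
noncomputable def trivGrammar (n : ℕ) : ContextFreeGrammar (Fin n × Bool) :=
  ⟨TrivNT n, none, (trivRules n).toFinset⟩

/-- A leftmost derivation in a context-free grammar, recording the list of rules applied. -/
inductive LeftmostDerivation {T : Type} (g : ContextFreeGrammar T) :
    List (Symbol T g.NT) → List (Symbol T g.NT) → List (ContextFreeRule T g.NT) → Prop
  | refl (w : List (Symbol T g.NT)) : LeftmostDerivation g w w []
  | step {u v w : List (Symbol T g.NT)} {r : ContextFreeRule T g.NT}
      {rs : List (ContextFreeRule T g.NT)}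
      (hr : r ∈ g.rules)
      (hstep : ∃ p q : List (Symbol T g.NT),
        (∀ s ∈ p, ∃ t : T, s = Symbol.terminal t) ∧
        u = p ++ [Symbol.nonterminal r.input] ++ q ∧
        v = p ++ r.output ++ q)
      (hrest : LeftmostDerivation g v w rs) :
      LeftmostDerivation g u w (r :: rs)


section LDGeneral

lemma split_unique {T : Type} {N : Type*} :
    ∀ (p p' : List (Symbol T N)) {q q' : List (Symbol T N)} {X X' : N},
    (∀ s ∈ p, ∃ a, s = Symbol.terminal a) → (∀ s ∈ p', ∃ a, s = Symbol.terminal a) →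
    p ++ Symbol.nonterminal X :: q = p' ++ Symbol.nonterminal X' :: q' →
    p = p' ∧ X = X' ∧ q = q' := by
  intro p
  induction p with
  | nil =>
    intro p' q q' X X' _ hp' h
    cases p' with
    | nil =>
      rw [List.nil_append, List.nil_append] at h
      injection h with h1 h2
      injection h1 with h1
      exact ⟨rfl, h1, h2⟩
    | cons s p'' =>
      rw [List.nil_append, List.cons_append] at h
      injection h with h1 h2
      obtain ⟨a, ha⟩ := hp' s (by simp)
      rw [ha] at h1
      simp at h1
  | cons s p2 ih =>
    intro p' q q' X X' hp hp' h
    cases p' with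
    | nil =>
      rw [List.nil_append, List.cons_append] at h
      injection h with h1 h2
      obtain ⟨a, ha⟩ := hp s (by simp)
      rw [ha] at h1
      simp at h1
    | cons s' p2' =>
      rw [List.cons_append, List.cons_append] at h
      injection h with h1 h2
      obtain ⟨hpe, hXe, hqe⟩ := ih p2' (fun x hx => hp x (by simp [hx]))
        (fun x hx => hp' x (by simp [hx])) h2
      exact ⟨by rw [h1, hpe], hXe, hqe⟩

lemma prefix_of_leftmost_aux {T : Type} {N : Type*} (t : List T) :
    ∀ (p z q : List (Symbol T N)) (X : N),
    (∀ s ∈ p, ∃ a, s = Symbol.terminal a) →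
    List.map Symbol.terminal t ++ z = p ++ Symbol.nonterminal X :: q →
    ∃ p₂, p = List.map Symbol.terminal t ++ p₂ := by
  induction t with
  | nil =>
    intro p z q X _ _
    exact ⟨p, by simp⟩
  | cons a t ih =>
    intro p z q X hp h
    cases p with
    | nil =>
      rw [List.nil_append, List.map_cons, List.cons_append] at h
      injection h with h1 h2
      simp at h1
    | cons s p2 =>
      rw [List.map_cons, List.cons_append, List.cons_append] at h
      injection h with h1 h2
      obtain ⟨p₂, hp₂⟩ := ih p2 z q X (fun x hx => hp x (by simp [hx])) h2
      exact ⟨p₂, by rw [List.map_cons, List.cons_append, hp₂, h1]⟩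

end LDGeneral

/-- A context-free grammar is unambiguous if every word of its language has exactly one
leftmost derivation from the initial symbol. -/
def Unambiguous {T : Type} (g : ContextFreeGrammar T) : Prop :=
  ∀ w : List T, ∀ rs₁ rs₂ : List (ContextFreeRule T g.NT),
    LeftmostDerivation g [Symbol.nonterminal g.initial] (w.map Symbol.terminal) rs₁ →
    LeftmostDerivation g [Symbol.nonterminal g.initial] (w.map Symbol.terminal) rs₂ →
    rs₁ = rs₂


/-- reducible copy of `trivGrammar` -/
noncomputable abbrev tG (n : ℕ) : ContextFreeGrammar (Fin n × Bool) :=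
  ⟨TrivNT n, none, (trivRules n).toFinset⟩

section Aux

variable {n : ℕ}


@[simp] lemma letterInv_letterInv (c : Fin n × Bool) : letterInv (letterInv c) = c := by
  simp [letterInv]

lemma mk_eq_one_iff {L : List (Fin n × Bool)} :
    FreeGroup.mk L = 1 ↔ FreeGroup.reduce L = [] := by
  constructor
  · intro h
    have := FreeGroup.reduce.sound (L₂ := ([] : List (Fin n × Bool)))
      (h.trans FreeGroup.one_eq_mk)
    simpa using this
  · intro h
    rw [FreeGroup.one_eq_mk]
    exact FreeGroup.reduce.exact (by simpa using h)

lemma mk_cancel (c : Fin n × Bool) : FreeGroup.mk [c, letterInv c] = 1 := by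
  rw [mk_eq_one_iff]
  simp [FreeGroup.reduce, letterInv]

lemma mk_single_ne_one (t : Fin n × Bool) : FreeGroup.mk [t] ≠ 1 := by
  intro h
  rw [mk_eq_one_iff] at h
  simp [FreeGroup.reduce] at h

lemma inv_mk_single (c : Fin n × Bool) :
    (FreeGroup.mk [c])⁻¹ = FreeGroup.mk [letterInv c] := by
  rw [inv_eq_iff_mul_eq_one, FreeGroup.mul_mk]
  exact mk_cancel c

lemma mk_single_inj {c t : Fin n × Bool} (h : FreeGroup.mk [c] = FreeGroup.mk [t]) : c = t := by
  have := FreeGroup.reduce.sound h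
  simpa [FreeGroup.reduce] using this

lemma eq_letterInv_iff {c d : Fin n × Bool} : d = letterInv c ↔ (c.1 = d.1 ∧ c.2 = !d.2) := by
  cases c with | mk a b => cases d with | mk a' b' =>
  cases b <;> cases b' <;> simp [letterInv, Prod.ext_iff, eq_comm]

lemma head_or_prefix : ∀ (N : ℕ) (x : List (Fin n × Bool)) (c : Fin n × Bool),
    x.length ≤ N →
    (∃ u, u <+: x ∧ FreeGroup.mk (c :: u) = 1) ∨
      ∃ r, FreeGroup.reduce (c :: x) = c :: r := by
  intro N
  induction N with
  | zero =>
    intro x c hx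
    right
    have : x = [] := List.eq_nil_of_length_eq_zero (Nat.le_zero.mp hx)
    subst this
    exact ⟨[], by simp [FreeGroup.reduce]⟩
  | succ N ih =>
    intro x c hx
    match x with
    | [] => exact Or.inr ⟨[], by simp [FreeGroup.reduce]⟩
    | d :: x' =>
      by_cases hd : d = letterInv c
      · exact Or.inl ⟨[d], ⟨x', rfl⟩, by rw [hd]; exact mk_cancel c⟩
      · have hx' : x'.length ≤ N := by simpa using hx
        rcases ih x' d hx' with ⟨u', hu', h1⟩ | ⟨r, hr⟩
        · obtain ⟨w, hw⟩ := hu'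
          have hwlen : w.length ≤ N := by
            have := congrArg List.length hw
            simp at this
            omega
          have hmk : FreeGroup.mk (c :: d :: x') = FreeGroup.mk (c :: w) := by
            rw [← hw]
            have : c :: d :: (u' ++ w) = (c :: d :: u') ++ w := by simp
            rw [this, ← FreeGroup.mul_mk]
            have : (c :: d :: u') = [c] ++ (d :: u') := by simp
            rw [this, ← FreeGroup.mul_mk, h1, mul_one, FreeGroup.mul_mk]
            rfl
          rcases ih w c hwlen with ⟨u'', hu'', h2⟩ | ⟨r, hr⟩
          · left
            refine ⟨(d :: u') ++ u'', ?_, ?_⟩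
            · rw [← hw]
              exact ⟨w.drop u''.length, by
                obtain ⟨w2, hw2⟩ := hu''
                simp [← hw2]⟩
            · have : c :: ((d :: u') ++ u'') = (c :: d :: u') ++ u'' := by simp
              rw [this, ← FreeGroup.mul_mk]
              have h3 : (c :: d :: u') = [c] ++ (d :: u') := by simp
              rw [h3, ← FreeGroup.mul_mk, h1, mul_one, FreeGroup.mul_mk]
              exact h2
          · right
            refine ⟨r, ?_⟩
            have := FreeGroup.reduce.sound hmk
            rw [this, hr]
        · right
          rw [FreeGroup.reduce.cons, hr]
          have hcond : ¬(c.1 = d.1 ∧ c.2 = !d.2) := by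
            rw [← eq_letterInv_iff]; exact hd
          simp only [if_neg hcond]
          exact ⟨d :: r, rfl⟩

lemma exists_prefix_cancel {x : List (Fin n × Bool)} {c t : Fin n × Bool}
    (h : FreeGroup.mk (c :: x) = FreeGroup.mk [t]) (hct : c ≠ t) :
    ∃ u, u <+: x ∧ FreeGroup.mk u = FreeGroup.mk [letterInv c] := by
  rcases head_or_prefix x.length x c le_rfl with ⟨u, hu, h1⟩ | ⟨r, hr⟩
  · refine ⟨u, hu, ?_⟩
    have : FreeGroup.mk [c] * FreeGroup.mk u = 1 := by rw [FreeGroup.mul_mk]; exact h1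
    have h2 : FreeGroup.mk u = (FreeGroup.mk [c])⁻¹ := eq_inv_of_mul_eq_one_right this
    rw [inv_mk_single] at h2
    exact h2
  · exfalso
    have h2 : FreeGroup.reduce (c :: x) = FreeGroup.reduce [t] := FreeGroup.reduce.sound h
    rw [hr] at h2
    simp [FreeGroup.reduce] at h2
    exact hct h2.1


abbrev TSym (n : ℕ) := Symbol (Fin n × Bool) (TrivNT n)

/-- rule S → ε -/
def ruleEps (n : ℕ) : ContextFreeRule (Fin n × Bool) (TrivNT n) := ⟨none, []⟩

/-- rule S → c N_{c⁻¹} S -/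
def ruleS (c : Fin n × Bool) : ContextFreeRule (Fin n × Bool) (TrivNT n) :=
  ⟨none, [Symbol.terminal c, Symbol.nonterminal (some (letterInv c)), Symbol.nonterminal none]⟩

/-- rule N_t → t -/
def ruleT (t : Fin n × Bool) : ContextFreeRule (Fin n × Bool) (TrivNT n) :=
  ⟨some t, [Symbol.terminal t]⟩

/-- rule N_t → c N_{c⁻¹} N_t -/
def ruleN (t c : Fin n × Bool) : ContextFreeRule (Fin n × Bool) (TrivNT n) :=
  ⟨some t, [Symbol.terminal c, Symbol.nonterminal (some (letterInv c)),
    Symbol.nonterminal (some t)]⟩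

lemma mem_rules_iff {r : ContextFreeRule (Fin n × Bool) (TrivNT n)} :
    r ∈ (tG n).rules ↔
      r = ruleEps n ∨ (∃ c, r = ruleS c) ∨ (∃ t, r = ruleT t) ∨
        (∃ t c, c ≠ t ∧ r = ruleN t c) := by
  show r ∈ (trivRules n).toFinset ↔ _
  rw [List.mem_toFinset]
  simp only [trivRules, List.mem_append, List.mem_map, List.mem_filterMap,
    Finset.mem_toList, Finset.mem_univ, true_and, List.mem_singleton]
  constructor
  · rintro (((h | ⟨c, hc⟩) | ⟨t, ht⟩) | ⟨⟨t, c⟩, htc⟩)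
    · exact Or.inl h
    · exact Or.inr (Or.inl ⟨c, hc.symm⟩)
    · exact Or.inr (Or.inr (Or.inl ⟨t, ht.symm⟩))
    · right; right; right
      refine ⟨t, c, ?_⟩
      by_cases h : c = t
      · simp [h] at htc
      · simp only [h, if_false] at htc
        exact ⟨h, (Option.some_injective _ htc.symm : _)⟩
  · rintro (h | ⟨c, hc⟩ | ⟨t, ht⟩ | ⟨t, c, hct, htc⟩)
    · exact Or.inl (Or.inl (Or.inl h))
    · exact Or.inl (Or.inl (Or.inr ⟨c, hc.symm⟩))
    · exact Or.inl (Or.inr ⟨t, ht.symm⟩)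
    · exact Or.inr ⟨(t, c), by simp only [hct, if_false]; exact congrArg some htc.symm⟩


def symVal : TSym n → FreeGroup (Fin n)
  | Symbol.terminal c => FreeGroup.mk [c]
  | Symbol.nonterminal none => 1
  | Symbol.nonterminal (some t) => FreeGroup.mk [t]

lemma rule_val {r : ContextFreeRule (Fin n × Bool) (TrivNT n)}
    (hr : r ∈ (tG n).rules) :
    symVal (Symbol.nonterminal r.input) = (r.output.map symVal).prod := by
  have hcc : ∀ c : Fin n × Bool, FreeGroup.mk [c] * FreeGroup.mk [letterInv c] = 1 := by
    intro c
    rw [FreeGroup.mul_mk]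
    exact mk_cancel c
  rcases mem_rules_iff.mp hr with h | ⟨c, h⟩ | ⟨t, h⟩ | ⟨t, c, hct, h⟩ <;> subst h
  · simp [ruleEps, symVal]
  · simp [ruleS, symVal, ← mul_assoc, hcc c]
  · simp [ruleT, symVal]
  · simp only [ruleN, symVal, List.map_cons, List.map_nil, List.prod_cons, List.prod_nil,
      mul_one, ← mul_assoc, hcc c, one_mul]

lemma derives_val {u v : List (TSym n)} (h : (tG n).Derives u v) :
    (u.map symVal).prod = (v.map symVal).prod := by
  induction h with
  | refl => rfl
  | tail _ hp ih =>
    rcases hp with ⟨r, hr, hrw⟩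
    rcases hrw.exists_parts with ⟨p, q, h1, h2⟩
    subst h1 h2
    rw [ih]
    simp only [List.map_append, List.prod_append, List.map_cons, List.map_nil,
      List.prod_cons, List.prod_nil, mul_one]
    rw [rule_val hr]

lemma prod_map_term (w : List (Fin n × Bool)) :
    ((w.map (Symbol.terminal : _ → TSym n)).map symVal).prod = FreeGroup.mk w := by
  induction w with
  | nil => simp; exact FreeGroup.one_eq_mk.symm
  | cons c w ih =>
    simp only [List.map_cons, List.prod_cons, ih, symVal]
    rw [FreeGroup.mul_mk]
    rfl

lemma lang_sound {w : List (Fin n × Bool)} (h : w ∈ (tG n).language) :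
    FreeGroup.mk w = 1 := by
  have hd : (tG n).Derives [Symbol.nonterminal (none : TrivNT n)]
      (w.map Symbol.terminal) := h
  have := derives_val hd
  rw [prod_map_term] at this
  simpa [symVal] using this.symm


lemma cons_shift (c : Fin n × Bool) (x : List (Fin n × Bool)) :
    FreeGroup.mk (c :: x) = FreeGroup.mk [c] * FreeGroup.mk x := by
  rw [FreeGroup.mul_mk]; rfl

lemma mk_cancel' (c : Fin n × Bool) :
    FreeGroup.mk [letterInv c] * FreeGroup.mk [c] = 1 := by
  have h := mk_cancel (letterInv c)
  rw [letterInv_letterInv] at h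
  rw [FreeGroup.mul_mk]
  simpa using h

lemma tail_eq {c : Fin n × Bool} {x : List (Fin n × Bool)} {g : FreeGroup (Fin n)}
    (h : FreeGroup.mk (c :: x) = g) :
    FreeGroup.mk x = FreeGroup.mk [letterInv c] * g := by
  have h2 : FreeGroup.mk [c] * FreeGroup.mk x = g := by
    rw [FreeGroup.mul_mk, List.singleton_append]; exact h
  have h3 : FreeGroup.mk x = (FreeGroup.mk [c])⁻¹ * g := by
    rw [← h2, ← mul_assoc, inv_mul_cancel, one_mul]
  rwa [inv_mk_single] at h3

lemma produce_Eps :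
    (tG n).Produces [Symbol.nonterminal (none : TrivNT n)] [] := by
  refine ⟨ruleEps n, mem_rules_iff.mpr (Or.inl rfl), ?_⟩
  have := (ruleEps n).rewrites_of_exists_parts [] []
  simpa [ruleEps] using this

lemma produce_S (c : Fin n × Bool) :
    (tG n).Produces [Symbol.nonterminal (none : TrivNT n)]
      [Symbol.terminal c, Symbol.nonterminal (some (letterInv c)),
        Symbol.nonterminal (none : TrivNT n)] := by
  refine ⟨ruleS c, mem_rules_iff.mpr (Or.inr (Or.inl ⟨c, rfl⟩)), ?_⟩
  have := (ruleS c).rewrites_of_exists_parts [] []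
  simpa [ruleS] using this

lemma produce_T (t : Fin n × Bool) :
    (tG n).Produces [Symbol.nonterminal (some t : TrivNT n)]
      [Symbol.terminal t] := by
  refine ⟨ruleT t, mem_rules_iff.mpr (Or.inr (Or.inr (Or.inl ⟨t, rfl⟩))), ?_⟩
  have := (ruleT t).rewrites_of_exists_parts [] []
  simpa [ruleT] using this

lemma produce_N {t c : Fin n × Bool} (hct : c ≠ t) :
    (tG n).Produces [Symbol.nonterminal (some t : TrivNT n)]
      [Symbol.terminal c, Symbol.nonterminal (some (letterInv c)),
        Symbol.nonterminal (some t : TrivNT n)] := by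
  refine ⟨ruleN t c, mem_rules_iff.mpr (Or.inr (Or.inr (Or.inr ⟨t, c, hct, rfl⟩))), ?_⟩
  have := (ruleN t c).rewrites_of_exists_parts [] []
  simpa [ruleN] using this

lemma assemble {c : Fin n × Bool} {X : TrivNT n} {u v : List (Fin n × Bool)}
    (hstep : (tG n).Produces [Symbol.nonterminal X]
      [Symbol.terminal c, Symbol.nonterminal (some (letterInv c)), Symbol.nonterminal X])
    (d1 : (tG n).Derives [Symbol.nonterminal (some (letterInv c) : TrivNT n)]
      (u.map Symbol.terminal))
    (d2 : (tG n).Derives [Symbol.nonterminal X] (v.map Symbol.terminal)) :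
    (tG n).Derives [Symbol.nonterminal X] ((c :: (u ++ v)).map Symbol.terminal) := by
  have e1 : (tG n).Derives
      (([Symbol.terminal c] ++ [Symbol.nonterminal (some (letterInv c))]) ++
        [Symbol.nonterminal X])
      (([Symbol.terminal c] ++ u.map Symbol.terminal) ++ [Symbol.nonterminal X]) :=
    ContextFreeGrammar.Derives.append_right
      (ContextFreeGrammar.Derives.append_left d1 [Symbol.terminal c]) [Symbol.nonterminal X]
  have e2 : (tG n).Derives
      (([Symbol.terminal c] ++ u.map Symbol.terminal) ++ [Symbol.nonterminal X])
      (([Symbol.terminal c] ++ u.map Symbol.terminal) ++ v.map Symbol.terminal) :=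
    ContextFreeGrammar.Derives.append_left d2 _
  have := hstep.trans_derives (e1.trans e2)
  simpa using this

lemma complete : ∀ (k : ℕ) (w : List (Fin n × Bool)), w.length ≤ k →
    (FreeGroup.mk w = 1 →
      (tG n).Derives [Symbol.nonterminal (none : TrivNT n)]
        (w.map Symbol.terminal)) ∧
    (∀ t : Fin n × Bool, FreeGroup.mk w = FreeGroup.mk [t] →
      (∀ u, u <+: w → u ≠ w → FreeGroup.mk u ≠ FreeGroup.mk [t]) →
      (tG n).Derives [Symbol.nonterminal (some t : TrivNT n)]
        (w.map Symbol.terminal)) := by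
  classical
  have nil_case :
      (FreeGroup.mk ([] : List (Fin n × Bool)) = 1 →
        (tG n).Derives [Symbol.nonterminal (none : TrivNT n)] []) ∧
      (∀ t : Fin n × Bool, FreeGroup.mk ([] : List (Fin n × Bool)) = FreeGroup.mk [t] →
        (∀ u, u <+: ([] : List (Fin n × Bool)) → u ≠ [] →
          FreeGroup.mk u ≠ FreeGroup.mk [t]) →
        (tG n).Derives [Symbol.nonterminal (some t : TrivNT n)] []) := by
    constructor
    · intro _
      exact produce_Eps.single
    · intro t ht _
      exact absurd (FreeGroup.one_eq_mk.symm.trans ht).symm (mk_single_ne_one t)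
  intro k
  induction k with
  | zero =>
    intro w hw
    have : w = [] := List.eq_nil_of_length_eq_zero (Nat.le_zero.mp hw)
    subst this
    simpa using nil_case
  | succ k ihk =>
    intro w hw
    match w with
    | [] => simpa using nil_case
    | c :: w' =>
      have hw' : w'.length ≤ k := by simpa using hw
      constructor
      · -- S-part
        intro h
        have hwc : FreeGroup.mk w' = FreeGroup.mk [letterInv c] := by
          have := tail_eq h
          rwa [mul_one] at this
        have hP : ∃ j, j ≤ w'.length ∧
            FreeGroup.mk (w'.take j) = FreeGroup.mk [letterInv c] :=
          ⟨w'.length, le_rfl, by simpa using hwc⟩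
        set k₀ := Nat.find hP with hk₀
        obtain ⟨hk0le, hk0val⟩ := Nat.find_spec hP
        set u := w'.take k₀ with hu
        set v := w'.drop k₀ with hv
        have huv : u ++ v = w' := List.take_append_drop _ _
        have hulen : u.length = k₀ := by
          rw [hu, List.length_take]; omega
        have hmin : ∀ p, p <+: u → p ≠ u →
            FreeGroup.mk p ≠ FreeGroup.mk [letterInv c] := by
          intro p hp hne heq
          have hple : p.length ≤ u.length := hp.length_le
          have hplt : p.length < k₀ := by
            rcases lt_or_eq_of_le hple with h' | h'
            · omega
            · exact absurd (hp.eq_of_length h') hne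
          have hpw : p <+: w' := hp.trans (List.take_prefix _ _)
          have hpt : p = w'.take p.length := List.prefix_iff_eq_take.mp hpw
          exact Nat.find_min hP hplt ⟨by omega, by rw [← hpt]; exact heq⟩
        have d1 := (ihk u (by omega)).2 (letterInv c) hk0val hmin
        have hv1 : FreeGroup.mk v = 1 := by
          have : FreeGroup.mk u * FreeGroup.mk v = FreeGroup.mk [letterInv c] := by
            rw [FreeGroup.mul_mk, huv]; exact hwc
          rw [hk0val] at this
          exact mul_left_cancel (a := FreeGroup.mk [letterInv c]) (by rw [this, mul_one])
        have d2 := (ihk v (by rw [hv, List.length_drop]; omega)).1 hv1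
        have := assemble (produce_S c) d1 d2
        rwa [huv] at this
      · -- N-part
        intro t h hmin0
        by_cases hc : c = t
        · subst hc
          have hw'nil : w' = [] := by
            by_contra hne
            refine hmin0 [c] ⟨w', rfl⟩ ?_ ?_
            · intro habs
              injection habs with _ h4
              exact hne h4.symm
            · rfl
          subst hw'nil
          exact (produce_T c).single
        · obtain ⟨u₀, hu₀, hu₀val⟩ := exists_prefix_cancel h hc
          have hP : ∃ j, j ≤ w'.length ∧
              FreeGroup.mk (w'.take j) = FreeGroup.mk [letterInv c] :=
            ⟨u₀.length, hu₀.length_le, by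
              rw [← List.prefix_iff_eq_take.mp hu₀]; exact hu₀val⟩
          set k₀ := Nat.find hP with hk₀
          obtain ⟨hk0le, hk0val⟩ := Nat.find_spec hP
          set u := w'.take k₀ with hu
          set v := w'.drop k₀ with hv
          have huv : u ++ v = w' := List.take_append_drop _ _
          have hulen : u.length = k₀ := by
            rw [hu, List.length_take]; omega
          have hmin : ∀ p, p <+: u → p ≠ u →
              FreeGroup.mk p ≠ FreeGroup.mk [letterInv c] := by
            intro p hp hne heq
            have hple : p.length ≤ u.length := hp.length_le
            have hplt : p.length < k₀ := by
              rcases lt_or_eq_of_le hple with h' | h'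
              · omega
              · exact absurd (hp.eq_of_length h') hne
            have hpw : p <+: w' := hp.trans (List.take_prefix _ _)
            have hpt : p = w'.take p.length := List.prefix_iff_eq_take.mp hpw
            exact Nat.find_min hP hplt ⟨by omega, by rw [← hpt]; exact heq⟩
          have d1 := (ihk u (by omega)).2 (letterInv c) hk0val hmin
          have hvt : FreeGroup.mk v = FreeGroup.mk [t] := by
            have h1 : FreeGroup.mk u * FreeGroup.mk v = FreeGroup.mk w' := by
              rw [FreeGroup.mul_mk, huv]
            have h2 : FreeGroup.mk w' = FreeGroup.mk [letterInv c] * FreeGroup.mk [t] :=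
              tail_eq h
            rw [hk0val] at h1
            exact mul_left_cancel (a := FreeGroup.mk [letterInv c]) (h1.trans h2)
          have hminv : ∀ p, p <+: v → p ≠ v →
              FreeGroup.mk p ≠ FreeGroup.mk [t] := by
            intro p hp hne heq
            obtain ⟨s, hs⟩ := hp
            refine hmin0 (c :: (u ++ p)) ⟨s, ?_⟩ ?_ ?_
            · rw [List.cons_append, List.append_assoc, hs, huv]
            · intro habs
              have h3 : u ++ p = w' := by
                have := habs
                simpa using this
              rw [← huv] at h3
              exact hne (List.append_cancel_left h3)
            · have heq2 : FreeGroup.mk (c :: (u ++ p)) = FreeGroup.mk p := by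
                rw [cons_shift, ← FreeGroup.mul_mk, hk0val, ← mul_assoc]
                rw [show FreeGroup.mk [c] * FreeGroup.mk [letterInv c] = 1 by
                  rw [FreeGroup.mul_mk]; simpa using mk_cancel c, one_mul]
              rw [heq2]
              exact heq
          have d2 := (ihk v (by rw [hv, List.length_drop]; omega)).2 t hvt hminv
          have := assemble (produce_N hc) d1 d2
          rwa [huv] at this

end Aux


section LDLemmas

lemma LD_prefix {T : Type} {g : ContextFreeGrammar T} {u ω : List (Symbol T g.NT)}
    {rs : List (ContextFreeRule T g.NT)} (h : LeftmostDerivation g u ω rs) :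
    ∀ (t : List T) (z : List (Symbol T g.NT)), u = t.map Symbol.terminal ++ z →
    ∃ ω', ω = t.map Symbol.terminal ++ ω' := by
  induction h with
  | refl w => exact fun t z hz => ⟨z, hz⟩
  | @step u v w r rs hr hstep hrest ih =>
    intro t z hz
    obtain ⟨p, q, hp, hu, hv⟩ := hstep
    have h3 : List.map Symbol.terminal t ++ z = p ++ Symbol.nonterminal r.input :: q := by
      have := hz.symm.trans hu
      rwa [List.append_assoc, List.singleton_append] at this
    obtain ⟨p₂, hp₂⟩ := prefix_of_leftmost_aux t p z q r.input hp h3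
    apply ih t (p₂ ++ r.output ++ q)
    rw [hv, hp₂]
    simp [List.append_assoc]

lemma LD_terminal {T : Type} {g : ContextFreeGrammar T} {u ω : List (Symbol T g.NT)}
    {rs : List (ContextFreeRule T g.NT)} (h : LeftmostDerivation g u ω rs)
    (hu : ∀ s ∈ u, ∃ a, s = Symbol.terminal a) : rs = [] ∧ ω = u := by
  cases h with
  | refl => exact ⟨rfl, rfl⟩
  | @step _ v _ r rs' hr hstep hrest =>
    exfalso
    obtain ⟨p, q, hp, hu', hv⟩ := hstep
    have hmem : Symbol.nonterminal r.input ∈ u := by rw [hu']; simp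
    obtain ⟨a, ha⟩ := hu _ hmem
    simp at ha

end LDLemmas


section Uniq

variable {n : ℕ}

lemma allterm_map {T : Type} {N : Type*} (tl : List T) :
    ∀ s ∈ tl.map (Symbol.terminal : T → Symbol T N), ∃ a, s = Symbol.terminal a := by
  intro s hs
  rw [List.mem_map] at hs
  obtain ⟨a, _, ha⟩ := hs
  exact ⟨a, ha.symm⟩

lemma LD_letter {T : Type} {g : ContextFreeGrammar T} {tl : List T} {c : T}
    {rest ω : List (Symbol T g.NT)} {rs : List (ContextFreeRule T g.NT)}
    (h : LeftmostDerivation g (tl.map Symbol.terminal ++ Symbol.terminal c :: rest) ω rs) :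
    ∃ ω', ω = tl.map Symbol.terminal ++ Symbol.terminal c :: ω' := by
  obtain ⟨ω', hω⟩ := LD_prefix h (tl ++ [c]) rest (by simp)
  exact ⟨ω', by simpa using hω⟩

lemma first_letter_eq {T : Type} {N : Type*} {tl : List T} {c c' : T}
    {ω ω' : List (Symbol T N)}
    (h : tl.map Symbol.terminal ++ Symbol.terminal c :: ω =
      tl.map Symbol.terminal ++ Symbol.terminal c' :: ω') : c = c' := by
  have h2 := List.append_cancel_left h
  injection h2 with h3 _
  injection h3

/-- The invariant shape of sentential forms in leftmost derivations of `trivGrammar`. -/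
def GoodShape (u : List (TSym n)) : Prop :=
  ∃ (tl M : List (Fin n × Bool)) (b : Bool),
    u = tl.map Symbol.terminal ++
      M.map (fun t => Symbol.nonterminal (some t : TrivNT n)) ++
      (if b then [Symbol.nonterminal (none : TrivNT n)] else [])

lemma rules_none {r : ContextFreeRule (Fin n × Bool) (TrivNT n)}
    (hr : r ∈ (tG n).rules) (h : r.input = none) :
    r = ruleEps n ∨ ∃ c, r = ruleS c := by
  rcases mem_rules_iff.mp hr with h' | ⟨c, h'⟩ | ⟨t, h'⟩ | ⟨t, c, hct, h'⟩
  · exact Or.inl h'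
  · exact Or.inr ⟨c, h'⟩
  · rw [h'] at h; simp [ruleT] at h
  · rw [h'] at h; simp [ruleN] at h

lemma rules_some {r : ContextFreeRule (Fin n × Bool) (TrivNT n)}
    (hr : r ∈ (tG n).rules) {t : Fin n × Bool} (h : r.input = some t) :
    r = ruleT t ∨ ∃ c, c ≠ t ∧ r = ruleN t c := by
  rcases mem_rules_iff.mp hr with h' | ⟨c, h'⟩ | ⟨t', h'⟩ | ⟨t', c, hct, h'⟩
  · rw [h'] at h; simp [ruleEps] at h
  · rw [h'] at h; simp [ruleS] at h
  · rw [h'] at h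
    simp only [ruleT] at h
    injection h with h
    subst h
    exact Or.inl h'
  · rw [h'] at h
    simp only [ruleN] at h
    injection h with h
    subst h
    exact Or.inr ⟨c, hct, h'⟩

lemma uniq (rs₁ : List (ContextFreeRule (Fin n × Bool) (tG n).NT)) :
    ∀ (u : List (Symbol (Fin n × Bool) (tG n).NT)) (w : List (Fin n × Bool))
      (rs₂ : List (ContextFreeRule (Fin n × Bool) (tG n).NT)),
    GoodShape u →
    LeftmostDerivation (tG n) u (w.map Symbol.terminal) rs₁ →
    LeftmostDerivation (tG n) u (w.map Symbol.terminal) rs₂ →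
    rs₁ = rs₂ := by
  induction rs₁ with
  | nil =>
    intro u w rs₂ hS h₁ h₂
    cases h₁
    exact (LD_terminal h₂ (allterm_map w)).1.symm
  | cons r rs ih =>
    intro u w rs₂ hS h₁ h₂
    cases h₁ with
    | @step _ v₁ _ _ _ hr hstep hrest =>
      obtain ⟨p, q, hp, hu, hv⟩ := hstep
      rw [List.append_assoc, List.singleton_append] at hu
      cases h₂ with
      | refl =>
        exfalso
        have hmem : Symbol.nonterminal r.input ∈ List.map Symbol.terminal w := by
          rw [hu]; simp
        obtain ⟨a, ha⟩ := allterm_map w _ hmem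
        simp at ha
      | @step _ v₂ _ r₂ rs₂' hr₂ hstep₂ hrest₂ =>
        obtain ⟨p₂, q₂, hp₂, hu₂, hv₂⟩ := hstep₂
        rw [List.append_assoc, List.singleton_append] at hu₂
        obtain ⟨hpe, hXe, hqe⟩ := split_unique p p₂ hp hp₂ (hu.symm.trans hu₂)
        subst hpe
        subst hqe
        obtain ⟨tl, M, b, hsh⟩ := hS
        cases M with
        | nil =>
          cases b with
          | false =>
            exfalso
            simp only [List.map_nil, List.append_nil, if_neg Bool.false_ne_true] at hsh
            have hmem : Symbol.nonterminal r.input ∈ u := by rw [hu]; simp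
            rw [hsh] at hmem
            obtain ⟨a, ha⟩ := allterm_map tl _ hmem
            simp at ha
          | true =>
            have hsh' : u = tl.map Symbol.terminal ++
                Symbol.nonterminal (none : TrivNT n) :: [] := by
              simpa using hsh
            obtain ⟨hptl, hXn, hq0⟩ :=
              split_unique p (tl.map Symbol.terminal) hp (allterm_map tl)
                (hu.symm.trans hsh')
            subst hptl
            subst hq0
            have hXn₂ : r₂.input = none := by rw [← hXe]; exact hXn
            rcases rules_none hr hXn with h1 | ⟨c, h1⟩ <;>
              rcases rules_none hr₂ hXn₂ with h2 | ⟨c', h2⟩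
            · -- Eps, Eps
              have hvv : v₁ = v₂ := by rw [hv, hv₂, h1, h2]
              have hGS : GoodShape v₁ := ⟨tl, [], false, by simp [hv, h1, ruleEps]⟩
              rw [h1, ← h2]
              congr 1
              exact ih v₁ w rs₂' hGS hrest (hvv ▸ hrest₂)
            · -- Eps, S c'
              exfalso
              have hv1 : v₁ = tl.map Symbol.terminal := by simp [hv, h1, ruleEps]
              have hterm := LD_terminal (hv1 ▸ hrest) (allterm_map tl)
              have hv2 : v₂ = tl.map Symbol.terminal ++ Symbol.terminal c' ::
                  [Symbol.nonterminal (some (letterInv c') : TrivNT n),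
                    Symbol.nonterminal (none : TrivNT n)] := by
                simp [hv₂, h2, ruleS]
              obtain ⟨ω₂, hω₂⟩ := LD_letter (hv2 ▸ hrest₂)
              have habs := hterm.2.symm.trans hω₂
              have := congrArg List.length habs
              simp at this
            · -- S c, Eps
              exfalso
              have hv2 : v₂ = tl.map Symbol.terminal := by simp [hv₂, h2, ruleEps]
              have hterm := LD_terminal (hv2 ▸ hrest₂) (allterm_map tl)
              have hv1 : v₁ = tl.map Symbol.terminal ++ Symbol.terminal c ::
                  [Symbol.nonterminal (some (letterInv c) : TrivNT n),
                    Symbol.nonterminal (none : TrivNT n)] := by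
                simp [hv, h1, ruleS]
              obtain ⟨ω₁, hω₁⟩ := LD_letter (hv1 ▸ hrest)
              have habs := hterm.2.symm.trans hω₁
              have := congrArg List.length habs
              simp at this
            · -- S c, S c'
              have hv1 : v₁ = tl.map Symbol.terminal ++ Symbol.terminal c ::
                  [Symbol.nonterminal (some (letterInv c) : TrivNT n),
                    Symbol.nonterminal (none : TrivNT n)] := by
                simp [hv, h1, ruleS]
              have hv2 : v₂ = tl.map Symbol.terminal ++ Symbol.terminal c' ::
                  [Symbol.nonterminal (some (letterInv c') : TrivNT n),
                    Symbol.nonterminal (none : TrivNT n)] := by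
                simp [hv₂, h2, ruleS]
              obtain ⟨ω₁, hω₁⟩ := LD_letter (hv1 ▸ hrest)
              obtain ⟨ω₂, hω₂⟩ := LD_letter (hv2 ▸ hrest₂)
              have hcc : c = c' := first_letter_eq (hω₁.symm.trans hω₂)
              subst hcc
              have hvv : v₁ = v₂ := by rw [hv1, hv2]
              have hGS : GoodShape v₁ :=
                ⟨tl ++ [c], [letterInv c], true, by simp [hv1]⟩
              rw [h1, ← h2]
              congr 1
              exact ih v₁ w rs₂' hGS hrest (hvv ▸ hrest₂)
        | cons m M' =>
          have hsh' : u = tl.map Symbol.terminal ++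
              Symbol.nonterminal (some m : TrivNT n) ::
              (M'.map (fun t => Symbol.nonterminal (some t : TrivNT n)) ++
                (if b then [Symbol.nonterminal (none : TrivNT n)] else [])) := by
            rw [hsh]; simp [List.append_assoc]
          obtain ⟨hptl, hXm, hqm⟩ :=
            split_unique p (tl.map Symbol.terminal) hp (allterm_map tl)
              (hu.symm.trans hsh')
          subst hptl
          have hXm₂ : r₂.input = some m := by rw [← hXe]; exact hXm
          rcases rules_some hr hXm with h1 | ⟨c, hcm, h1⟩ <;>
            rcases rules_some hr₂ hXm₂ with h2 | ⟨c', hcm', h2⟩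
          · -- T, T
            have hvv : v₁ = v₂ := by rw [hv, hv₂, h1, h2]
            have hGS : GoodShape v₁ := ⟨tl ++ [m], M', b, by
              rw [hv, h1, hqm]; simp [ruleT, List.append_assoc]⟩
            rw [h1, ← h2]
            congr 1
            exact ih v₁ w rs₂' hGS hrest (hvv ▸ hrest₂)
          · -- T, N c'
            exfalso
            have hv1 : v₁ = tl.map Symbol.terminal ++ Symbol.terminal m :: q := by
              rw [hv, h1]; simp [ruleT]
            have hv2 : v₂ = tl.map Symbol.terminal ++ Symbol.terminal c' ::
                ([Symbol.nonterminal (some (letterInv c') : TrivNT n),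
                  Symbol.nonterminal (some m : TrivNT n)] ++ q) := by
              rw [hv₂, h2]; simp [ruleN]
            obtain ⟨ω₁, hω₁⟩ := LD_letter (hv1 ▸ hrest)
            obtain ⟨ω₂, hω₂⟩ := LD_letter (hv2 ▸ hrest₂)
            exact hcm' (first_letter_eq (hω₂.symm.trans hω₁))
          · -- N c, T
            exfalso
            have hv2 : v₂ = tl.map Symbol.terminal ++ Symbol.terminal m :: q := by
              rw [hv₂, h2]; simp [ruleT]
            have hv1 : v₁ = tl.map Symbol.terminal ++ Symbol.terminal c ::
                ([Symbol.nonterminal (some (letterInv c) : TrivNT n),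
                  Symbol.nonterminal (some m : TrivNT n)] ++ q) := by
              rw [hv, h1]; simp [ruleN]
            obtain ⟨ω₁, hω₁⟩ := LD_letter (hv1 ▸ hrest)
            obtain ⟨ω₂, hω₂⟩ := LD_letter (hv2 ▸ hrest₂)
            exact hcm (first_letter_eq (hω₁.symm.trans hω₂))
          · -- N c, N c'
            have hv1 : v₁ = tl.map Symbol.terminal ++ Symbol.terminal c ::
                ([Symbol.nonterminal (some (letterInv c) : TrivNT n),
                  Symbol.nonterminal (some m : TrivNT n)] ++ q) := by
              rw [hv, h1]; simp [ruleN]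
            have hv2 : v₂ = tl.map Symbol.terminal ++ Symbol.terminal c' ::
                ([Symbol.nonterminal (some (letterInv c') : TrivNT n),
                  Symbol.nonterminal (some m : TrivNT n)] ++ q) := by
              rw [hv₂, h2]; simp [ruleN]
            obtain ⟨ω₁, hω₁⟩ := LD_letter (hv1 ▸ hrest)
            obtain ⟨ω₂, hω₂⟩ := LD_letter (hv2 ▸ hrest₂)
            have hcc : c = c' := first_letter_eq (hω₁.symm.trans hω₂)
            subst hcc
            have hvv : v₁ = v₂ := by rw [hv1, hv2]
            have hGS : GoodShape v₁ := ⟨tl ++ [c], letterInv c :: m :: M', b, by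
              rw [hv1, hqm]; simp [List.append_assoc]⟩
            rw [h1, ← h2]
            congr 1
            exact ih v₁ w rs₂' hGS hrest (hvv ▸ hrest₂)

end Uniq

/-- The explicit grammar above generates exactly the language of all words over
`{a₁^{±1},…,aₙ^{±1}}` representing the identity of the free group `Fₙ`, and it is
unambiguous. -/
theorem stmt8 (n : ℕ) :
    (trivGrammar n).language = { w : List (Fin n × Bool) | FreeGroup.mk w = 1 } ∧
    Unambiguous (trivGrammar n) := by
  constructor
  · ext w
    constructor
    · exact fun h => lang_sound h
    · intro h
      rw [ContextFreeGrammar.mem_language_iff]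
      exact (complete w.length w le_rfl).1 h
  · intro w rs₁ rs₂ h₁ h₂
    exact uniq rs₁ [Symbol.nonterminal (none : TrivNT n)] w rs₂ ⟨[], [], true, by simp⟩ h₁ h₂
end

section
/- Let H ≤ F_n be a finitely generated subgroup of rank at least 2 with basis h_1,...,h_r, let g ∈ F_n, and suppose there exist nontrivial equations w ∈ I_g of degree d and w' ∈ I_g of degree d'. Then for every k ≥ 0, the number ρ_{g,d+d'+2k}(M) of cyclically reduced words of length at most M over {h_1^{±1},...,h_r^{±1}, x^{±1}} representing equations in I_g of degree d+d'+2k grows exponentially in M; that is, there exist α, β > 0 with e^{αM} ≤ ρ_{g,d+d'+2k}(M) ≤ e^{βM} for all sufficiently large M. -/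
/-- The number of occurrences of `x` and `x⁻¹` in a word over the basis
`h₁,…,h_r,x` (encoded as `Fin r ⊕ Unit`, with `Sum.inr ()` being `x`) of `H * ⟨x⟩`. -/
def xcount {r : ℕ} (w : List ((Fin r ⊕ Unit) × Bool)) : ℕ :=
  w.countP fun l => match l.1 with | Sum.inr _ => true | Sum.inl _ => false

/-- A word is cyclically reduced iff its double is a reduced word. -/
def CyclicallyReduced {r : ℕ} (w : List ((Fin r ⊕ Unit) × Bool)) : Prop :=
  FreeGroup.reduce (w ++ w) = w ++ w

/-- `rhoD φ d M` counts the cyclically reduced words of length at most `M` over the basis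
of `H * ⟨x⟩` that represent an equation in `I_g = ker φ` of degree `d`. -/
noncomputable def rhoD {n r : ℕ} (φ : FreeGroup (Fin r ⊕ Unit) →* FreeGroup (Fin n))
    (d M : ℕ) : ℕ :=
  Set.ncard { w : List ((Fin r ⊕ Unit) × Bool) |
    w.length ≤ M ∧ CyclicallyReduced w ∧ xcount w = d ∧ FreeGroup.mk w ∈ MonoidHom.ker φ }

/-- `rho φ M` counts the cyclically reduced words of length at most `M` representing an
equation in `I_g = ker φ`. -/
noncomputable def rho {n r : ℕ} (φ : FreeGroup (Fin r ⊕ Unit) →* FreeGroup (Fin n))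
    (M : ℕ) : ℕ :=
  Set.ncard { w : List ((Fin r ⊕ Unit) × Bool) |
    w.length ≤ M ∧ CyclicallyReduced w ∧ FreeGroup.mk w ∈ MonoidHom.ker φ }

namespace Stmt12Aux

/-- The "no cancellation" relation between adjacent letters. -/
def Gd {γ : Type*} (p q : γ × Bool) : Prop := ¬(p.1 = q.1 ∧ p.2 = !q.2)

lemma chain'_of_forall {β : Type*} {R : β → β → Prop} :
    ∀ {L : List β}, (∀ x ∈ L, ∀ y ∈ L, R x y) → List.Chain' R L
  | [], _ => List.isChain_nil
  | a :: L, h => List.IsChain.cons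
      (chain'_of_forall fun x hx y hy =>
        h x (List.mem_cons_of_mem _ hx) y (List.mem_cons_of_mem _ hy))
      (fun y hy => h a List.mem_cons_self y
        (List.mem_cons_of_mem _ (List.mem_of_mem_head? hy)))

lemma reduce_eq_self_of_chain' {γ : Type*} [DecidableEq γ] :
    ∀ {L : List (γ × Bool)}, List.Chain' Gd L → FreeGroup.reduce L = L := by
  intro L
  induction L with
  | nil => intro _; rfl
  | cons a L ih =>
    intro h
    unfold List.Chain' at h
    rw [List.isChain_cons] at h
    rw [FreeGroup.reduce.cons, ih h.2]
    cases L with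
    | nil => rfl
    | cons b t =>
      have hab : ¬(a.1 = b.1 ∧ a.2 = !b.2) := h.1 b rfl
      simp [hab]

lemma exists_of_not_chain' {β : Type*} {R : β → β → Prop} :
    ∀ {L : List β}, ¬ List.Chain' R L → ∃ L₁ a b L₂, L = L₁ ++ a :: b :: L₂ ∧ ¬ R a b
  | [], h => absurd List.isChain_nil h
  | [a], h => absurd (List.isChain_singleton a) h
  | a :: b :: t, h => by
    unfold List.Chain' at h
    rw [List.isChain_cons_cons] at h
    by_cases hr : R a b
    · have h2 : ¬ List.Chain' R (b :: t) := fun hc => h ⟨hr, hc⟩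
      obtain ⟨L₁, x, y, L₂, hEq, hxy⟩ := exists_of_not_chain' h2
      exact ⟨a :: L₁, x, y, L₂, by rw [hEq]; rfl, hxy⟩
    · exact ⟨[], a, b, t, rfl, hr⟩

lemma chain'_of_reduce_eq_self {γ : Type*} [DecidableEq γ] {L : List (γ × Bool)}
    (h : FreeGroup.reduce L = L) : List.Chain' Gd L := by
  by_contra hc
  obtain ⟨L₁, a, b, L₂, hEq, hab⟩ := exists_of_not_chain' hc
  rw [Gd, not_not] at hab
  obtain ⟨h1, h2⟩ := hab
  have hb : b = (a.1, !a.2) := by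
    obtain ⟨a1, a2⟩ := a; obtain ⟨b1, b2⟩ := b
    simp only at h1 h2
    subst h1
    cases b2 <;> simp_all
  apply FreeGroup.reduce.not (L₁ := L) (L₂ := L₁) (L₃ := L₂) (x := a.1) (b := a.2)
  rw [h, hEq, hb]

lemma mem_head?_append' {β : Type*} {l1 l2 : List β} {x : β} (h : x ∈ (l1 ++ l2).head?) :
    x ∈ l1.head? ∨ x ∈ l2.head? := by
  cases l1 with
  | nil => right; simpa using h
  | cons a t => left; simpa using h

lemma mem_getLast?_append' {β : Type*} {l1 l2 : List β} {x : β} (h : x ∈ (l1 ++ l2).getLast?) :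
    x ∈ l1.getLast? ∨ x ∈ l2.getLast? := by
  rcases eq_or_ne l2 [] with rfl | h2
  · left; simpa using h
  · right; rwa [List.getLast?_append_of_ne_nil _ h2] at h

lemma pick3 {β : Type*} (c0 c1 c2 : β) (h01 : c0 ≠ c1) (h02 : c0 ≠ c2) (h12 : c1 ≠ c2)
    (e0 e1 : β) : ∃ x, (x = c0 ∨ x = c1 ∨ x = c2) ∧ x ≠ e0 ∧ x ≠ e1 := by
  by_cases H0 : c0 = e0 ∨ c0 = e1
  · by_cases H1 : c1 = e0 ∨ c1 = e1
    · refine ⟨c2, by tauto, ?_, ?_⟩ <;> rintro rfl <;>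
        rcases H0 with h | h <;> rcases H1 with h' | h' <;> simp_all
    · exact ⟨c1, by tauto, by tauto, by tauto⟩
  · exact ⟨c0, by tauto, by tauto, by tauto⟩

lemma pick2 {β : Type*} (c0 c1 : β) (h01 : c0 ≠ c1) (e0 : β) :
    ∃ x, (x = c0 ∨ x = c1) ∧ x ≠ e0 := by
  by_cases H : c0 = e0
  · exact ⟨c1, Or.inr rfl, fun hh => h01 (by rw [H, ← hh])⟩
  · exact ⟨c0, Or.inl rfl, H⟩

lemma xcount_append {r : ℕ} (l1 l2 : List ((Fin r ⊕ Unit) × Bool)) :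
    xcount (l1 ++ l2) = xcount l1 + xcount l2 := List.countP_append

lemma xcount_invRev {r : ℕ} (l : List ((Fin r ⊕ Unit) × Bool)) :
    xcount (FreeGroup.invRev l) = xcount l := by
  unfold xcount FreeGroup.invRev
  rw [List.countP_reverse, List.countP_map]
  rfl

lemma xcount_eq_zero_of_inl {r : ℕ} {l : List ((Fin r ⊕ Unit) × Bool)}
    (h : ∀ p ∈ l, ∃ (j : Fin r) (b : Bool), p = (Sum.inl j, b)) : xcount l = 0 := by
  apply List.countP_eq_zero.mpr
  intro a ha
  obtain ⟨j, b, rfl⟩ := h a ha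
  simp

/-- Padding a cyclically reduced kernel word by a two-letter conjugation, to control
its first and last letters. -/
lemma padding {n r : ℕ} (hr : 2 ≤ r) (φ : FreeGroup (Fin r ⊕ Unit) →* FreeGroup (Fin n))
    (s : Bool) (w : List ((Fin r ⊕ Unit) × Bool)) (hw : CyclicallyReduced w) (hw0 : w ≠ [])
    (hker : FreeGroup.mk w ∈ MonoidHom.ker φ) :
    ∃ (iA : Fin r) (W : List ((Fin r ⊕ Unit) × Bool)),
      W.length = w.length + 4 ∧ xcount W = xcount w ∧ FreeGroup.mk W ∈ MonoidHom.ker φ ∧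
      List.Chain' Gd W ∧ W.head? = some (Sum.inl iA, s) ∧
      W.getLast? = some (Sum.inl iA, !s) := by
  set i0 : Fin r := ⟨0, by omega⟩ with hi0
  set i1 : Fin r := ⟨1, by omega⟩ with hi1
  have hchw : List.Chain' Gd w := (chain'_of_reduce_eq_self hw).left_of_append
  set hd : (Fin r ⊕ Unit) × Bool := w.head hw0 with hhd
  set lw : (Fin r ⊕ Unit) × Bool := w.getLast hw0 with hlw
  obtain ⟨B, hBmem, hB1, hB2⟩ := pick3 ((Sum.inl i0 : Fin r ⊕ Unit), true)
    ((Sum.inl i1 : Fin r ⊕ Unit), true) ((Sum.inl i0 : Fin r ⊕ Unit), false)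
    (by simp [hi0, hi1, Fin.ext_iff]) (by simp) (by simp [hi0, hi1, Fin.ext_iff])
    (hd.1, !hd.2) lw
  obtain ⟨A, hAmem, hA⟩ := pick2 ((Sum.inl i0 : Fin r ⊕ Unit), s)
    ((Sum.inl i1 : Fin r ⊕ Unit), s) (by simp [hi0, hi1, Fin.ext_iff]) (B.1, !B.2)
  obtain ⟨jB, bB, hBeq⟩ : ∃ (j : Fin r) (b : Bool), B = (Sum.inl j, b) := by
    rcases hBmem with rfl | rfl | rfl
    exacts [⟨i0, true, rfl⟩, ⟨i1, true, rfl⟩, ⟨i0, false, rfl⟩]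
  obtain ⟨jA, hAeq⟩ : ∃ (j : Fin r), A = (Sum.inl j, s) := by
    rcases hAmem with rfl | rfl
    exacts [⟨i0, rfl⟩, ⟨i1, rfl⟩]
  refine ⟨jA, [A, B] ++ (w ++ FreeGroup.invRev [A, B]), ?_, ?_, ?_, ?_, ?_, ?_⟩
  · simp [FreeGroup.invRev]
  · rw [xcount_append, xcount_append, xcount_invRev]
    have h1 : xcount [A, B] = 0 := xcount_eq_zero_of_inl (by
      intro p hp
      simp only [List.mem_cons, List.not_mem_nil, or_false] at hp
      rcases hp with rfl | rfl
      exacts [⟨jA, s, hAeq⟩, ⟨jB, bB, hBeq⟩])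
    rw [h1]; omega
  · have hmk : FreeGroup.mk ([A, B] ++ (w ++ FreeGroup.invRev [A, B]))
        = FreeGroup.mk [A, B] * FreeGroup.mk w * (FreeGroup.mk [A, B])⁻¹ := by
      rw [FreeGroup.inv_mk, FreeGroup.mul_mk, FreeGroup.mul_mk, List.append_assoc]
    rw [MonoidHom.mem_ker] at hker ⊢
    rw [hmk, map_mul, map_mul, map_inv, hker, mul_one, mul_inv_cancel]
  · have hinv : FreeGroup.invRev [A, B] = [(B.1, !B.2), (A.1, !A.2)] := by
      simp [FreeGroup.invRev]
    rw [hinv]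
    show List.Chain' Gd (A :: B :: (w ++ [(B.1, !B.2), (A.1, !A.2)]))
    unfold List.Chain'
    rw [List.isChain_cons_cons]
    constructor
    · rintro ⟨e1, e2⟩
      exact hA (Prod.ext e1 e2)
    · apply List.IsChain.cons
      · apply List.IsChain.append hchw
        · rw [List.isChain_pair]
          rintro ⟨e1, e2⟩
          apply hA
          simp only at e1 e2
          exact Prod.ext e1.symm (by simpa using e2.symm)
        · intro x hx y hy
          have hx' : x = lw := by
            rw [List.getLast?_eq_getLast hw0] at hx
            simpa [hlw, eq_comm] using hx
          have hy' : y = (B.1, !B.2) := by simpa [eq_comm] using hy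
          subst hx' hy'
          rintro ⟨e1, e2⟩
          simp only at e1 e2
          exact hB2 (Prod.ext e1.symm (by simpa using e2.symm))
      · intro y hy
        rw [List.head?_append_of_ne_nil _ hw0, List.head?_eq_head hw0] at hy
        have hy' : y = hd := by simpa [hhd, eq_comm] using hy
        subst hy'
        rintro ⟨e1, e2⟩
        exact hB1 (Prod.ext e1 e2)
  · rw [hAeq]; rfl
  · have hinv : FreeGroup.invRev [A, B] = [(B.1, !B.2), (A.1, !A.2)] := by
      simp [FreeGroup.invRev]
    rw [hinv, List.getLast?_append_of_ne_nil _ (by simp : w ++ [(B.1, !B.2), (A.1, !A.2)] ≠ []),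
      List.getLast?_append_of_ne_nil _ (by simp : [(B.1, !B.2), (A.1, !A.2)] ≠ ([] : List ((Fin r ⊕ Unit) × Bool)))]
    rw [hAeq]
    rfl

end Stmt12Aux

/-- If `H ≤ Fₙ` has rank `r ≥ 2` (with basis `h`) and `I_g` contains nontrivial
equations of degrees `d` and `d'` (witnessed by nonempty cyclically reduced words `w`,
`w'` in the kernel), then for every `k ≥ 0` the counting function
`ρ_{g,d+d'+2k}` grows exponentially. -/
theorem stmt12 {n r : ℕ} (hr : 2 ≤ r) (h : Fin r → FreeGroup (Fin n))
    (hbasis : Function.Injective (FreeGroup.lift h)) (g : FreeGroup (Fin n))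
    (d d' k : ℕ) (w w' : List ((Fin r ⊕ Unit) × Bool))
    (hw : CyclicallyReduced w) (hw0 : w ≠ [])
    (hwker : FreeGroup.mk w ∈ MonoidHom.ker (FreeGroup.lift (Sum.elim h fun _ => g)))
    (hwd : xcount w = d)
    (hw' : CyclicallyReduced w') (hw'0 : w' ≠ [])
    (hw'ker : FreeGroup.mk w' ∈ MonoidHom.ker (FreeGroup.lift (Sum.elim h fun _ => g)))
    (hw'd : xcount w' = d') :
    ∃ α β : ℝ, 0 < α ∧ 0 < β ∧ ∃ M₀ : ℕ, ∀ M : ℕ, M₀ ≤ M →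
      Real.exp (α * M) ≤ (rhoD (FreeGroup.lift (Sum.elim h fun _ => g)) (d + d' + 2 * k) M : ℝ) ∧
      (rhoD (FreeGroup.lift (Sum.elim h fun _ => g)) (d + d' + 2 * k) M : ℝ) ≤ Real.exp (β * M) := by
  clear hbasis
  open Stmt12Aux in
  set φ := FreeGroup.lift (Sum.elim h fun _ => g) with hφ
  obtain ⟨iA, W, hWlen, hWx, hWker, hWch, hWh, hWl⟩ :=
    Stmt12Aux.padding hr φ true w hw hw0 hwker
  obtain ⟨iA', W', hW'len, hW'x, hW'ker, hW'ch, hW'h, hW'l⟩ :=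
    Stmt12Aux.padding hr φ false w' hw' hw'0 hw'ker
  have hWne : W ≠ [] := by intro e; rw [e] at hWh; simp at hWh
  have hW'ne : W' ≠ [] := by intro e; rw [e] at hW'h; simp at hW'h
  set i0 : Fin r := ⟨0, by omega⟩ with hi0
  set i1 : Fin r := ⟨1, by omega⟩ with hi1
  have hi01 : i0 ≠ i1 := by simp [hi0, hi1, Fin.ext_iff]
  set C : ℕ := w.length + w'.length + 2 * k + 8 with hC
  set N : ℕ := Fintype.card ((Fin r ⊕ Unit) × Bool) + 1 with hN
  have hN2 : 2 ≤ N := by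
    have := Fintype.card_pos (α := (Fin r ⊕ Unit) × Bool)
    omega
  have hNpos : (0 : ℝ) < (N : ℝ) := by positivity
  refine ⟨Real.log 2 / 4, Real.log N, by positivity, ?_, 2 * C + 2, ?_⟩
  · apply Real.log_pos
    exact_mod_cast (by omega : 1 < N)
  intro M hM
  -- the counting set
  set S : Set (List ((Fin r ⊕ Unit) × Bool)) :=
    { l : List ((Fin r ⊕ Unit) × Bool) | l.length ≤ M ∧ CyclicallyReduced l ∧
      xcount l = d + d' + 2 * k ∧ FreeGroup.mk l ∈ MonoidHom.ker φ } with hS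
  have hrho : rhoD φ (d + d' + 2 * k) M = S.ncard := rfl
  have hSfin : S.Finite := (List.finite_length_le _ M).subset fun l hl => hl.1
  -- upper bound
  have hup : rhoD φ (d + d' + 2 * k) M ≤ N ^ M := by
    have hinj : Set.InjOn
        (fun (l : List ((Fin r ⊕ Unit) × Bool)) => fun i : Fin M => l[(i : ℕ)]?) S := by
      intro l1 h1 l2 h2 hEq
      apply List.ext_getElem?
      intro nn
      rcases lt_or_ge nn M with hn | hn
      · exact congrFun hEq ⟨nn, hn⟩
      · rw [List.getElem?_eq_none (le_trans h1.1 hn), List.getElem?_eq_none (le_trans h2.1 hn)]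
    have hcount := Set.ncard_le_ncard_of_injOn _ (fun a _ => Set.mem_univ _) hinj Set.finite_univ
    rw [Set.ncard_univ, Nat.card_eq_fintype_card, Fintype.card_fun, Fintype.card_option,
      Fintype.card_fin] at hcount
    rw [hrho]
    exact hcount
  -- lower bound construction
  set m : ℕ := (M - C) / 2 with hm
  set U : (Fin m → Bool) → List ((Fin r ⊕ Unit) × Bool) :=
    fun f => List.ofFn (fun i => ((Sum.inl (if f i then i0 else i1) : Fin r ⊕ Unit), false))
    with hU
  set Q : List ((Fin r ⊕ Unit) × Bool) := List.replicate k ((Sum.inr () : Fin r ⊕ Unit), true)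
    with hQ
  set F : (Fin m → Bool) → List ((Fin r ⊕ Unit) × Bool) :=
    fun f => W ++ ((U f ++ Q) ++ (W' ++ FreeGroup.invRev (U f ++ Q))) with hF
  have hUmem : ∀ f, ∀ x ∈ U f, ∃ j : Fin r, x = (Sum.inl j, false) := by
    intro f x hx
    simp only [hU, List.mem_ofFn, Set.mem_range] at hx
    obtain ⟨i, hi⟩ := hx
    exact ⟨if f i then i0 else i1, hi.symm⟩
  have hcmem : ∀ f, ∀ x ∈ U f ++ Q,
      (∃ j : Fin r, x = (Sum.inl j, false)) ∨ x = (Sum.inr (), true) := by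
    intro f x hx
    rcases List.mem_append.mp hx with hx | hx
    · exact Or.inl (hUmem f x hx)
    · exact Or.inr (List.mem_replicate.mp hx).2
  have hDmem : ∀ f, ∀ x ∈ FreeGroup.invRev (U f ++ Q),
      (∃ j : Fin r, x = (Sum.inl j, true)) ∨ x = (Sum.inr (), false) := by
    intro f x hx
    rw [FreeGroup.invRev, List.mem_reverse, List.mem_map] at hx
    obtain ⟨y, hy, hyx⟩ := hx
    rcases hcmem f y hy with ⟨j, rfl⟩ | rfl
    · exact Or.inl ⟨j, hyx.symm⟩
    · exact Or.inr hyx.symm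
  have hcch : ∀ f, List.Chain' Stmt12Aux.Gd (U f ++ Q) := by
    intro f
    apply Stmt12Aux.chain'_of_forall
    intro x hx y hy
    rcases hcmem f x hx with ⟨j, rfl⟩ | rfl <;>
      rcases hcmem f y hy with ⟨j', rfl⟩ | rfl <;> simp [Stmt12Aux.Gd]
  have hDch : ∀ f, List.Chain' Stmt12Aux.Gd (FreeGroup.invRev (U f ++ Q)) := by
    intro f
    apply Stmt12Aux.chain'_of_forall
    intro x hx y hy
    rcases hDmem f x hx with ⟨j, rfl⟩ | rfl <;>
      rcases hDmem f y hy with ⟨j', rfl⟩ | rfl <;> simp [Stmt12Aux.Gd]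
  have hW'Dne : ∀ f, W' ++ FreeGroup.invRev (U f ++ Q) ≠ [] := by
    intro f hh
    exact hW'ne (List.append_eq_nil_iff.mp hh).1
  have hrestne : ∀ f, (U f ++ Q) ++ (W' ++ FreeGroup.invRev (U f ++ Q)) ≠ [] := by
    intro f hh
    exact hW'Dne f (List.append_eq_nil_iff.mp hh).2
  have hhead : ∀ f, (F f).head? = some (Sum.inl iA, true) := by
    intro f
    simp only [hF]
    rw [List.head?_append_of_ne_nil _ hWne, hWh]
  have hlastF : ∀ f, ∀ x ∈ (F f).getLast?,
      (∃ j : Fin r, x = (Sum.inl j, true)) ∨ x = (Sum.inr (), false) := by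
    intro f x hx
    simp only [hF] at hx
    rw [List.getLast?_append_of_ne_nil _ (hrestne f),
      List.getLast?_append_of_ne_nil _ (hW'Dne f)] at hx
    rcases Stmt12Aux.mem_getLast?_append' hx with h1 | h2
    · rw [hW'l] at h1
      exact Or.inl ⟨iA', by simpa [eq_comm] using h1⟩
    · exact hDmem f x (List.mem_of_mem_getLast? h2)
  have hchainF : ∀ f, List.Chain' Stmt12Aux.Gd (F f) := by
    intro f
    simp only [hF]
    apply List.IsChain.append hWch
    · apply List.IsChain.append (hcch f)
      · apply List.IsChain.append hW'ch (hDch f)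
        intro x hx y hy
        rw [hW'l] at hx
        have hx' : x = (Sum.inl iA', true) := by simpa [eq_comm] using hx
        subst hx'
        rcases hDmem f y (List.mem_of_mem_head? hy) with ⟨j, rfl⟩ | rfl <;>
          simp [Stmt12Aux.Gd]
      · intro x hx y hy
        rw [List.head?_append_of_ne_nil _ hW'ne, hW'h] at hy
        have hy' : y = (Sum.inl iA', false) := by simpa [eq_comm] using hy
        subst hy'
        rcases hcmem f x (List.mem_of_mem_getLast? hx) with ⟨j, rfl⟩ | rfl <;>
          simp [Stmt12Aux.Gd]
    · intro x hx y hy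
      rw [hWl] at hx
      have hx' : x = (Sum.inl iA, false) := by simpa [eq_comm] using hx
      subst hx'
      rcases Stmt12Aux.mem_head?_append' hy with h1 | h2
      · rcases hcmem f y (List.mem_of_mem_head? h1) with ⟨j, rfl⟩ | rfl <;>
          simp [Stmt12Aux.Gd]
      · rw [List.head?_append_of_ne_nil _ hW'ne, hW'h] at h2
        have hy' : y = (Sum.inl iA', false) := by simpa [eq_comm] using h2
        subst hy'
        simp [Stmt12Aux.Gd]
  have hcyc : ∀ f, CyclicallyReduced (F f) := by
    intro f
    show FreeGroup.reduce (F f ++ F f) = F f ++ F f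
    apply Stmt12Aux.reduce_eq_self_of_chain'
    apply List.IsChain.append (hchainF f) (hchainF f)
    intro x hx y hy
    rw [hhead f] at hy
    have hy' : y = (Sum.inl iA, true) := by simpa [eq_comm] using hy
    subst hy'
    rcases hlastF f x hx with ⟨j, rfl⟩ | rfl <;> simp [Stmt12Aux.Gd]
  have hQx : xcount Q = k := by
    have : ∀ a ∈ Q, (fun l : (Fin r ⊕ Unit) × Bool =>
        match l.1 with | Sum.inr _ => true | Sum.inl _ => false) a = true := by
      intro a ha
      rw [(List.mem_replicate.mp ha).2]
    have h2 := List.countP_eq_length.mpr this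
    rw [hQ] at h2 ⊢
    rw [xcount, h2, List.length_replicate]
  have hUx : ∀ f, xcount (U f) = 0 := by
    intro f
    apply Stmt12Aux.xcount_eq_zero_of_inl
    intro p hp
    obtain ⟨j, rfl⟩ := hUmem f p hp
    exact ⟨j, false, rfl⟩
  have hxF : ∀ f, xcount (F f) = d + d' + 2 * k := by
    intro f
    simp only [hF, Stmt12Aux.xcount_append, Stmt12Aux.xcount_invRev]
    rw [hWx, hW'x, hwd, hw'd, hUx f, hQx]
    ring
  have hkerF : ∀ f, FreeGroup.mk (F f) ∈ MonoidHom.ker φ := by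
    intro f
    have hmkeq : FreeGroup.mk (F f) = FreeGroup.mk W * (FreeGroup.mk (U f ++ Q) *
        (FreeGroup.mk W' * (FreeGroup.mk (U f ++ Q))⁻¹)) := by
      rw [FreeGroup.inv_mk, FreeGroup.mul_mk, FreeGroup.mul_mk, FreeGroup.mul_mk]
    rw [MonoidHom.mem_ker] at hWker hW'ker ⊢
    rw [hmkeq, map_mul, map_mul, map_mul, map_inv, hWker, hW'ker, one_mul, one_mul,
      mul_inv_cancel]
  have hlenF : ∀ f, (F f).length = 2 * m + C := by
    intro f
    simp only [hF, List.length_append, FreeGroup.invRev_length, hWlen, hW'len, hU, hQ,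
      List.length_ofFn, List.length_replicate]
    omega
  have hmemF : ∀ f, F f ∈ S := by
    intro f
    refine ⟨?_, hcyc f, hxF f, hkerF f⟩
    rw [hlenF f]
    omega
  have hFinj : Set.InjOn F Set.univ := by
    have hkey : ∀ f, ((F f).drop W.length).take m = U f := by
      intro f
      simp only [hF]
      rw [List.drop_left, List.append_assoc]
      have h2 := List.take_left (l₁ := U f) (l₂ := Q ++ (W' ++ FreeGroup.invRev (U f ++ Q)))
      rwa [show (U f).length = m by simp [hU]] at h2
    intro f1 _ f2 _ hEq
    have hUeq : U f1 = U f2 := by rw [← hkey f1, ← hkey f2, hEq]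
    simp only [hU] at hUeq
    have h3 := List.ofFn_inj.mp hUeq
    funext i
    have h4 := congrFun h3 i
    simp only [Prod.mk.injEq, Sum.inl.injEq, and_true] at h4
    cases hb1 : f1 i <;> cases hb2 : f2 i <;> simp_all
  have hlow : 2 ^ m ≤ rhoD φ (d + d' + 2 * k) M := by
    have hc := Set.ncard_le_ncard_of_injOn F (fun f _ => hmemF f) hFinj hSfin
    rw [Set.ncard_univ, Nat.card_eq_fintype_card, Fintype.card_fun, Fintype.card_bool,
      Fintype.card_fin] at hc
    rw [hrho]
    exact hc
  constructor
  · have hlow2 : (2 : ℝ) ^ m ≤ (rhoD φ (d + d' + 2 * k) M : ℝ) := by exact_mod_cast hlow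
    refine le_trans ?_ hlow2
    rw [show ((2 : ℝ) ^ m) = Real.exp (m * Real.log 2) by
      rw [Real.exp_nat_mul, Real.exp_log two_pos]]
    apply Real.exp_le_exp.mpr
    have hlog := Real.log_pos (by norm_num : (1 : ℝ) < 2)
    have h4m : M ≤ 4 * m := by omega
    have h4m' : (M : ℝ) ≤ 4 * (m : ℝ) := by exact_mod_cast h4m
    nlinarith
  · have hup2 : (rhoD φ (d + d' + 2 * k) M : ℝ) ≤ (N : ℝ) ^ M := by exact_mod_cast hup
    refine le_trans hup2 ?_
    rw [mul_comm, Real.exp_nat_mul, Real.exp_log hNpos]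
end

section
/- Let H ≤ F_n be finitely generated of rank at least 2 and g ∈ F_n with I_g nontrivial. Then the function ρ_g(M), counting cyclically reduced words over the basis {h_1^{±1},...,h_r^{±1},x^{±1}} of H * ⟨x⟩ of length at most M that lie in I_g, has exponential growth: there exist α, β > 0 with e^{αM} ≤ ρ_g(M) ≤ e^{βM} for all large M. -/
set_option linter.unusedSectionVars false

namespace Stmt13Aux

variable {α : Type*} [DecidableEq α]

def inv1 (a : α × Bool) : α × Bool := (a.1, !a.2)

def Rel (a b : α × Bool) : Prop := ¬(a.1 = b.1 ∧ a.2 = !b.2)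

lemma rel_iff (a b : α × Bool) : Rel a b ↔ b ≠ inv1 a := by
  unfold Rel inv1
  constructor
  · rintro h rfl; exact h ⟨rfl, by simp⟩
  · rintro h ⟨h1, h2⟩
    apply h
    ext
    · exact h1.symm
    · simp [h2]

lemma rel_inv1_left (a b : α × Bool) : Rel (inv1 a) b ↔ b ≠ a := by
  rw [rel_iff]
  unfold inv1
  simp

theorem reduce_eq_self_iff (L : List (α × Bool)) :
    FreeGroup.reduce L = L ↔ List.Chain' Rel L := by
  induction L with
  | nil => simp [List.Chain']
  | cons x tl ih =>
    constructor
    · intro hred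
      rw [FreeGroup.reduce.cons] at hred
      rcases hT : FreeGroup.reduce tl with _ | ⟨hd, tl2⟩
      · rw [hT] at hred
        simp only at hred
        have : tl = [] := by
          have := congrArg List.length hred
          simp at this
          simpa using this.symm
        subst this
        simp [List.Chain']
      · rw [hT] at hred
        simp only at hred
        by_cases hc : x.1 = hd.1 ∧ x.2 = !hd.2
        · rw [if_pos hc] at hred
          exfalso
          have hle : (hd :: tl2).length ≤ tl.length :=
            FreeGroup.Red.length_le (hT ▸ FreeGroup.reduce.red)
          have := congrArg List.length hred
          simp at this hle
          omega
        · rw [if_neg hc] at hred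
          have htl : tl = hd :: tl2 := by
            injection hred with _ h2
            exact h2.symm
          subst htl
          exact List.isChain_cons_cons.mpr ⟨hc, ih.mp hT⟩
    · intro hch
      have htl : FreeGroup.reduce tl = tl := ih.mpr hch.tail
      rw [FreeGroup.reduce.cons, htl]
      cases tl with
      | nil => rfl
      | cons hd tl2 =>
        simp only
        rw [if_neg (List.isChain_cons_cons.mp hch).1]

/-- A block `t c t⁻¹ w c w⁻¹`. -/
def block (c : List (α × Bool)) (t w : α × Bool) : List (α × Bool) :=
  t :: (c ++ inv1 t :: w :: (c ++ [inv1 w]))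

lemma block_length (c : List (α × Bool)) (t w : α × Bool) :
    (block c t w).length = 2 * c.length + 4 := by
  simp [block]; omega

lemma block_inj {c : List (α × Bool)} {t w₁ w₂ : α × Bool}
    (h : block c t w₁ = block c t w₂) : w₁ = w₂ := by
  unfold block at h
  simp at h
  exact h.1

/-- The word attached to a list of booleans. -/
def wordOf (c : List (α × Bool)) (t u v : α × Bool) : List Bool → List (α × Bool)
  | [] => []
  | b :: l => block c t (if b then u else v) ++ wordOf c t u v l

lemma wordOf_append (c : List (α × Bool)) (t u v : α × Bool) (l₁ l₂ : List Bool) :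
    wordOf c t u v (l₁ ++ l₂) = wordOf c t u v l₁ ++ wordOf c t u v l₂ := by
  induction l₁ with
  | nil => rfl
  | cons b l ih => simp [wordOf, ih]

lemma wordOf_length (c : List (α × Bool)) (t u v : α × Bool) (l : List Bool) :
    (wordOf c t u v l).length = l.length * (2 * c.length + 4) := by
  induction l with
  | nil => simp [wordOf]
  | cons b l ih => simp [wordOf, ih, block_length]; ring

lemma wordOf_inj {c : List (α × Bool)} {t u v : α × Bool} (huv : u ≠ v) :
    ∀ {l₁ l₂ : List Bool}, l₁.length = l₂.length →
      wordOf c t u v l₁ = wordOf c t u v l₂ → l₁ = l₂ := by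
  intro l₁
  induction l₁ with
  | nil => intro l₂ hlen _; exact (List.length_eq_zero_iff.mp hlen.symm).symm ▸ rfl
  | cons b l ih =>
    intro l₂ hlen hw
    cases l₂ with
    | nil => simp at hlen
    | cons b₂ l₂ =>
      simp only [wordOf] at hw
      have hb : block c t (if b then u else v) = block c t (if b₂ then u else v) ∧
          wordOf c t u v l = wordOf c t u v l₂ :=
        List.append_inj hw (by rw [block_length, block_length])
      have hbb : b = b₂ := by
        have := block_inj hb.1
        cases b <;> cases b₂ <;> simp_all
      subst hbb
      rw [ih (by simpa using hlen) hb.2]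

lemma chain'_block {c : List (α × Bool)} {t w : α × Bool}
    (hc : c ≠ []) (hch : List.Chain' Rel c)
    (h1 : Rel t (c.head hc)) (h2 : Rel (c.getLast hc) (inv1 t))
    (h3 : Rel (inv1 t) w) (h4 : Rel w (c.head hc)) (h5 : Rel (c.getLast hc) (inv1 w)) :
    List.Chain' Rel (block c t w) := by
  have hh := List.head?_eq_head hc
  have hl := List.getLast?_eq_getLast hc
  have e : block c t w = ([t] ++ c) ++ ([inv1 t, w] ++ (c ++ [inv1 w])) := by simp [block]
  rw [e]
  apply List.IsChain.append
  · apply List.IsChain.append (by simp) hch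
    intro x hx y hy
    rw [hh] at hy
    simp at hx hy
    subst hx; subst hy; exact h1
  · apply List.IsChain.append (List.isChain_pair.mpr h3)
    · apply List.IsChain.append hch (by simp)
      intro x hx y hy
      rw [hl] at hx
      simp at hx hy
      subst hx; subst hy; exact h5
    · intro x hx y hy
      rw [List.head?_append_of_ne_nil _ hc, hh] at hy
      simp at hx hy
      subst hx; subst hy; exact h4
  · intro x hx y hy
    rw [List.getLast?_append_of_ne_nil _ hc, hl] at hx
    rw [List.head?_append_of_ne_nil _ (by simp)] at hy
    simp at hx hy
    subst hx; subst hy; exact h2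

lemma head?_wordOf (c : List (α × Bool)) (t u v : α × Bool) (l : List Bool) (hl : l ≠ []) :
    (wordOf c t u v l).head? = some t := by
  cases l with
  | nil => exact absurd rfl hl
  | cons b l => rw [wordOf]; rfl

lemma chain'_wordOf {c : List (α × Bool)} {t u v : α × Bool}
    (hc : c ≠ []) (hch : List.Chain' Rel c)
    (h1 : ∀ w, w = t ∨ w = u ∨ w = v → Rel w (c.head hc))
    (h2 : ∀ w, w = t ∨ w = u ∨ w = v → Rel (c.getLast hc) (inv1 w))
    (h3 : ∀ w, w = u ∨ w = v → Rel (inv1 t) w)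
    (h4 : ∀ w, w = u ∨ w = v → Rel (inv1 w) t) :
    ∀ l : List Bool, List.Chain' Rel (wordOf c t u v l) := by
  intro l
  induction l with
  | nil => simp [wordOf, List.Chain']
  | cons b l ih =>
    rw [wordOf]
    apply List.IsChain.append _ ih
    · intro x hx y hy
      have hbl : (block c t (if b then u else v)).getLast? = some (inv1 (if b then u else v)) := by
        have e : block c t (if b then u else v) =
            (t :: (c ++ inv1 t :: (if b then u else v) :: c)) ++ [inv1 (if b then u else v)] := by
          simp [block]
        rw [e, List.getLast?_concat]
      rw [hbl] at hx
      cases l with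
      | nil => simp [wordOf] at hy
      | cons b' l' =>
        rw [head?_wordOf c t u v _ (by simp)] at hy
        simp at hx hy
        subst hx; subst hy
        exact h4 _ (by cases b <;> simp)
    · apply chain'_block hc hch
      · exact h1 t (Or.inl rfl)
      · exact h2 t (Or.inl rfl)
      · exact h3 _ (by cases b <;> simp)
      · exact h1 _ (by cases b <;> simp)
      · exact h2 _ (by cases b <;> simp)
lemma mk_singleton_inv1 (a : α × Bool) : FreeGroup.mk [inv1 a] = (FreeGroup.mk [a])⁻¹ := by
  rw [FreeGroup.inv_mk]
  simp [FreeGroup.invRev, inv1]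

lemma wordOf_mem_ker {G : Type*} [Group G] (φ : FreeGroup α →* G) {c : List (α × Bool)}
    (hker : φ (FreeGroup.mk c) = 1) (t u v : α × Bool) (l : List Bool) :
    φ (FreeGroup.mk (wordOf c t u v l)) = 1 := by
  induction l with
  | nil => rw [wordOf, ← FreeGroup.one_eq_mk, map_one]
  | cons b l ih =>
    rw [wordOf, ← FreeGroup.mul_mk, map_mul, ih, mul_one]
    have e : block c t (if b then u else v) =
        [t] ++ c ++ [inv1 t] ++ [(if b then u else v)] ++ c ++ [inv1 (if b then u else v)] := by
      simp [block]
    rw [e, ← FreeGroup.mul_mk, ← FreeGroup.mul_mk, ← FreeGroup.mul_mk, ← FreeGroup.mul_mk,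
      ← FreeGroup.mul_mk]
    simp only [map_mul, hker, mk_singleton_inv1, map_inv, mul_one]
    group
lemma inv1_inv1 (a : α × Bool) : inv1 (inv1 a) = a := by simp [inv1]

lemma rel_of_ne_inv1 {a b : α × Bool} (h : a ≠ inv1 b) : Rel a b := by
  rw [rel_iff]
  intro hb
  exact h (by rw [hb, inv1_inv1])

lemma rel_inv1_right {a b : α × Bool} (h : b ≠ a) : Rel a (inv1 b) := by
  rw [rel_iff]
  intro he
  have := congrArg inv1 he
  rw [inv1_inv1, inv1_inv1] at this
  exact h this

theorem count_len_eq (k : ℕ) : {l : List Bool | l.length = k}.ncard = 2 ^ k := by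
  rw [← Nat.card_coe_set_eq]
  have e : {l : List Bool | l.length = k} ≃ (Fin k → Bool) :=
    (Equiv.subtypeEquivRight (fun l => Iff.rfl)).trans (Equiv.vectorEquivFin Bool k)
  rw [Nat.card_congr e]
  simp [Nat.card_eq_fintype_card]

theorem count_len_le {A : Type*} [Fintype A] [DecidableEq A] (M : ℕ) :
    {w : List A | w.length ≤ M}.ncard ≤ (Fintype.card A + 1) ^ M := by
  rw [← Nat.card_coe_set_eq]
  have hinj : Function.Injective
      (fun (w : {w : List A // w.length ≤ M}) (i : Fin M) => w.1[(i : ℕ)]?) := by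
    intro w1 w2 hf
    apply Subtype.ext
    apply List.ext_getElem?
    intro i
    by_cases hi : i < M
    · exact congrFun hf ⟨i, hi⟩
    · rw [List.getElem?_eq_none (w1.2.trans (le_of_not_gt hi)),
        List.getElem?_eq_none (w2.2.trans (le_of_not_gt hi))]
  have h2 := Nat.card_le_card_of_injective _ hinj
  refine h2.trans (le_of_eq ?_)
  simp [Nat.card_eq_fintype_card]

end Stmt13Aux



open Stmt13Aux in
/-- If `H ≤ Fₙ` has rank `r ≥ 2` (with basis `h`) and the ideal
`I_g = ker(φ_g : H * ⟨x⟩ → Fₙ)` is nontrivial, then the number `ρ_g(M)` of cyclically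
reduced words of length at most `M` lying in `I_g` grows exponentially. -/
theorem stmt13 {n r : ℕ} (hr : 2 ≤ r) (h : Fin r → FreeGroup (Fin n))
    (hbasis : Function.Injective (FreeGroup.lift h)) (g : FreeGroup (Fin n))
    (hnontriv : ∃ u : FreeGroup (Fin r ⊕ Unit), u ≠ 1 ∧
      u ∈ MonoidHom.ker (FreeGroup.lift (Sum.elim h fun _ => g))) :
    ∃ α β : ℝ, 0 < α ∧ 0 < β ∧ ∃ M₀ : ℕ, ∀ M : ℕ, M₀ ≤ M →
      Real.exp (α * M) ≤ (rho (FreeGroup.lift (Sum.elim h fun _ => g)) M : ℝ) ∧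
      (rho (FreeGroup.lift (Sum.elim h fun _ => g)) M : ℝ) ≤ Real.exp (β * M) := by
  classical
  obtain ⟨u0, hu0ne, hu0ker⟩ := hnontriv
  set φ := FreeGroup.lift (Sum.elim h fun _ => g) with hφ
  set c := FreeGroup.toWord u0 with hcdef
  have hc : c ≠ [] := fun hnil => hu0ne (FreeGroup.toWord_eq_nil_iff.mp hnil)
  have hcred : List.Chain' Rel c :=
    (reduce_eq_self_iff c).mp (FreeGroup.reduce_toWord u0)
  have hcker : φ (FreeGroup.mk c) = 1 := by
    rw [hcdef, FreeGroup.mk_toWord]; exact hu0ker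
  set x1 := c.head hc with hx1
  set xL := c.getLast hc with hxL
  -- find three suitable distinct letters
  have hcard : 6 ≤ Fintype.card ((Fin r ⊕ Unit) × Bool) := by
    simp
    omega
  set F : Finset ((Fin r ⊕ Unit) × Bool) := {inv1 x1, xL} with hF
  have hFcard : F.card ≤ 2 := (Finset.card_insert_le _ _).trans (by simp)
  have hScard : 3 ≤ (Finset.univ \ F).card := by
    have := Finset.le_card_sdiff F Finset.univ
    rw [Finset.card_univ] at this
    omega
  obtain ⟨t, ht⟩ := Finset.card_pos.mp (show 0 < (Finset.univ \ F).card by omega)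
  obtain ⟨uu, huu⟩ := Finset.card_pos.mp (show 0 < ((Finset.univ \ F).erase t).card by
    rw [Finset.card_erase_of_mem ht]; omega)
  obtain ⟨vv, hvv⟩ := Finset.card_pos.mp
    (show 0 < (((Finset.univ \ F).erase t).erase uu).card by
      rw [Finset.card_erase_of_mem huu, Finset.card_erase_of_mem ht]; omega)
  have hvu : vv ≠ uu := (Finset.mem_erase.mp hvv).1
  have hvt : vv ≠ t := (Finset.mem_erase.mp (Finset.mem_erase.mp hvv).2).1
  have hut : uu ≠ t := (Finset.mem_erase.mp huu).1
  have hmem : ∀ w, w = t ∨ w = uu ∨ w = vv → w ≠ inv1 x1 ∧ w ≠ xL := by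
    intro w hw
    have hwS : w ∈ Finset.univ \ F := by
      rcases hw with rfl | rfl | rfl
      · exact ht
      · exact (Finset.mem_erase.mp huu).2
      · exact (Finset.mem_erase.mp (Finset.mem_erase.mp hvv).2).2
    rw [Finset.mem_sdiff, hF] at hwS
    have := hwS.2
    simp at this
    exact this
  -- chain hypotheses
  have hch1 : ∀ w, w = t ∨ w = uu ∨ w = vv → Rel w x1 :=
    fun w hw => rel_of_ne_inv1 (hmem w hw).1
  have hch2 : ∀ w, w = t ∨ w = uu ∨ w = vv → Rel xL (inv1 w) :=
    fun w hw => rel_inv1_right (hmem w hw).2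
  have hch3 : ∀ w, w = uu ∨ w = vv → Rel (inv1 t) w := by
    intro w hw
    rw [rel_inv1_left]
    rcases hw with rfl | rfl
    · exact hut
    · exact hvt
  have hch4 : ∀ w, w = uu ∨ w = vv → Rel (inv1 w) t := by
    intro w hw
    rw [rel_inv1_left]
    rcases hw with rfl | rfl
    · exact hut.symm
    · exact hvt.symm
  have hchain := chain'_wordOf hc hcred hch1 hch2 hch3 hch4
  -- parameters
  set ℓ : ℕ := 2 * c.length + 4 with hℓ
  have hℓpos : 0 < ℓ := by omega
  set NA : ℕ := Fintype.card ((Fin r ⊕ Unit) × Bool) + 1 with hNA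
  refine ⟨Real.log 2 / (2 * ℓ), Real.log NA, ?_, ?_, 2 * ℓ, ?_⟩
  · apply div_pos (Real.log_pos (by norm_num))
    positivity
  · apply Real.log_pos
    have : (7:ℝ) ≤ NA := by exact_mod_cast (by omega : 7 ≤ NA)
    linarith
  intro M hM
  set SM := { w : List ((Fin r ⊕ Unit) × Bool) |
    w.length ≤ M ∧ CyclicallyReduced w ∧ FreeGroup.mk w ∈ MonoidHom.ker φ } with hSM
  have hrho : rho φ M = SM.ncard := rfl
  have hfin : SM.Finite := (List.finite_length_le _ M).subset (fun w hw => hw.1)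
  set k : ℕ := M / ℓ with hk
  have hk2 : 2 ≤ k := (Nat.le_div_iff_mul_le hℓpos).mpr (by omega)
  constructor
  · -- lower bound
    have hsub : (fun l => wordOf c t uu vv l) '' {l : List Bool | l.length = k} ⊆ SM := by
      rintro w ⟨l, hl, rfl⟩
      simp only [Set.mem_setOf_eq] at hl
      refine ⟨?_, ?_, ?_⟩
      · rw [wordOf_length, hl, ← hℓ]
        exact Nat.div_mul_le_self M ℓ
      · show FreeGroup.reduce _ = _
        rw [← wordOf_append]
        exact (reduce_eq_self_iff _).mpr (hchain (l ++ l))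
      · exact MonoidHom.mem_ker.mpr (wordOf_mem_ker φ hcker t uu vv l)
    have himg : ((fun l => wordOf c t uu vv l) '' {l : List Bool | l.length = k}).ncard
        = 2 ^ k := by
      rw [Set.ncard_image_of_injOn, count_len_eq]
      intro l1 h1 l2 h2 heq
      exact wordOf_inj (Ne.symm hvu) (h1.trans h2.symm) heq
    have hcount : 2 ^ k ≤ SM.ncard := himg ▸ Set.ncard_le_ncard hsub hfin
    have hMle : M ≤ 2 * ℓ * k := by
      have h1 : ℓ * k + M % ℓ = M := Nat.div_add_mod M ℓ
      have h2 : M % ℓ < ℓ := Nat.mod_lt _ hℓpos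
      have h3 : ℓ ≤ ℓ * k := Nat.le_mul_of_pos_right ℓ (by omega)
      calc M = ℓ * k + M % ℓ := h1.symm
        _ ≤ ℓ * k + ℓ * k := Nat.add_le_add_left (h2.le.trans h3) _
        _ = 2 * ℓ * k := by ring
    have hexp : Real.exp (Real.log 2 / (2 * ℓ) * M) ≤ (2 : ℝ) ^ k := by
      rw [show ((2:ℝ) ^ k) = Real.exp (k * Real.log 2) by
        rw [Real.exp_nat_mul, Real.exp_log (by norm_num)]]
      apply Real.exp_le_exp.mpr
      have hMle' : (M : ℝ) ≤ 2 * ℓ * k := by exact_mod_cast hMle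
      have hpos : (0:ℝ) < 2 * ℓ := by positivity
      rw [div_mul_eq_mul_div, div_le_iff₀ hpos]
      calc Real.log 2 * M ≤ Real.log 2 * (2 * ℓ * k) := by
            apply mul_le_mul_of_nonneg_left hMle' (Real.log_nonneg (by norm_num))
        _ = k * Real.log 2 * (2 * ℓ) := by ring
    calc Real.exp (Real.log 2 / (2 * ℓ) * M) ≤ (2:ℝ) ^ k := hexp
      _ ≤ (SM.ncard : ℝ) := by exact_mod_cast hcount
      _ = (rho φ M : ℝ) := by rw [hrho]
  · -- upper bound
    have hub : SM.ncard ≤ NA ^ M := by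
      refine (Set.ncard_le_ncard (fun w hw => hw.1) (List.finite_length_le _ M)).trans ?_
      exact count_len_le M
    calc (rho φ M : ℝ) ≤ (NA ^ M : ℕ) := by exact_mod_cast hrho ▸ hub
      _ = ((NA : ℝ)) ^ M := by push_cast; ring
      _ = Real.exp (Real.log NA) ^ M := by
          rw [Real.exp_log (by exact_mod_cast (by omega : 0 < NA))]
      _ = Real.exp (Real.log NA * M) := by rw [← Real.exp_nat_mul]; ring_nf
end

section
/- Let F = ⟨a⟩, H = ⟨a^m⟩ with m ≥ 1, g = a^k with k ≥ 0 coprime to m, and fix an integer d ≥ 1. Then the function ρ_{g,d}(M), counting cyclically reduced words of length at most M in the basis {h, x} of H * ⟨x⟩ that lie in I_g and have degree d, is bounded above by a polynomial in M of degree d. -/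
/-- Number of occurrences of `x^{±1}` in a word over the basis `{h, x}` of `H * ⟨x⟩`
(encoded as `Bool`, with `true = x` and `false = h`). -/
def xcount1 (w : List (Bool × Bool)) : ℕ := w.countP fun l => l.1

/-- A word is cyclically reduced iff its double is a reduced word. -/
def CyclicallyReduced1 (w : List (Bool × Bool)) : Prop :=
  FreeGroup.reduce (w ++ w) = w ++ w

def eps1 (b : Bool) : ℤ := if b then 1 else -1

def code1 : List (Bool × Bool) → ℤ × List (Bool × ℤ)
  | [] => (0, [])
  | (false, b) :: t => ((code1 t).1 + eps1 b, (code1 t).2)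
  | (true, b) :: t => (0, (b, (code1 t).1) :: (code1 t).2)

def hpow1 (e : ℤ) : List (Bool × Bool) := List.replicate e.natAbs (false, decide (0 < e))

def decode1 (p : ℤ × List (Bool × ℤ)) : List (Bool × Bool) :=
  hpow1 p.1 ++ (p.2.map fun q => (true, q.1) :: hpow1 q.2).flatten

def NoInv1 (w : List (Bool × Bool)) : Prop :=
  ∀ (L1 : List (Bool × Bool)) (x : Bool) (b : Bool) (L2 : List (Bool × Bool)),
    w ≠ L1 ++ (x, b) :: (x, !b) :: L2

lemma noInv_of_cyclred {w : List (Bool × Bool)} (h : CyclicallyReduced1 w) : NoInv1 w := by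
  intro L1 x b L2 hw
  have : FreeGroup.reduce (w ++ w) = L1 ++ (x, b) :: (x, !b) :: (L2 ++ w) := by
    rw [h]; rw [hw]; simp
  exact FreeGroup.reduce.not this

lemma noInv_tail {a : Bool × Bool} {t : List (Bool × Bool)} (h : NoInv1 (a :: t)) : NoInv1 t := by
  intro L1 x b L2 ht
  exact h (a :: L1) x b L2 (by simp [ht])

lemma hpow1_cons {e : ℤ} {b : Bool}
    (h : e = 0 ∨ (b = true ∧ 0 < e) ∨ (b = false ∧ e < 0)) :
    hpow1 (e + eps1 b) = (false, b) :: hpow1 e := by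
  rcases h with rfl | ⟨rfl, he⟩ | ⟨rfl, he⟩
  · cases b <;> simp [hpow1, eps1]
  · unfold hpow1 eps1
    rw [if_pos rfl,
      show (e + 1).natAbs = e.natAbs + 1 by omega,
      show decide (0 < e + 1) = true from decide_eq_true (by omega),
      show decide (0 < e) = true from decide_eq_true he,
      List.replicate_succ]
  · unfold hpow1 eps1
    rw [if_neg (by simp),
      show (e + -1).natAbs = e.natAbs + 1 by omega,
      show decide (0 < e + -1) = false from decide_eq_false (by omega),
      show decide (0 < e) = false from decide_eq_false (by omega),
      List.replicate_succ]

lemma decode_code {w : List (Bool × Bool)} (h : NoInv1 w) : decode1 (code1 w) = w := by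
  induction w with
  | nil => simp [code1, decode1, hpow1]
  | cons a t ih =>
    obtain ⟨c, b⟩ := a
    have iht := ih (noInv_tail h)
    cases c with
    | true =>
      show decode1 (0, (b, (code1 t).1) :: (code1 t).2) = (true, b) :: t
      have hstep : decode1 (0, (b, (code1 t).1) :: (code1 t).2)
          = (true, b) :: decode1 (code1 t) := by
        unfold decode1
        simp [hpow1]
      rw [hstep, iht]
    | false =>
      have hcond : (code1 t).1 = 0 ∨ (b = true ∧ 0 < (code1 t).1) ∨
          (b = false ∧ (code1 t).1 < 0) := by
        by_contra hc
        push_neg at hc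
        set e := (code1 t).1 with he
        have hsign : decide (0 < e) = !b := by
          cases b
          · have h1 : e ≠ 0 := hc.1
            have h2 : 0 ≤ e := hc.2.2 rfl
            simp only [Bool.not_false]
            exact decide_eq_true (by omega)
          · have h1 : e ≠ 0 := hc.1
            have h2 : e ≤ 0 := hc.2.1 rfl
            simp only [Bool.not_true]
            exact decide_eq_false (by omega)
        have hnat : ∃ n, e.natAbs = n + 1 := ⟨e.natAbs - 1, by have := hc.1; omega⟩
        obtain ⟨n, hn⟩ := hnat
        obtain ⟨r, hr⟩ : ∃ r, t = (false, !b) :: r := by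
          refine ⟨List.replicate n (false, !b) ++
            ((code1 t).2.map fun q => (true, q.1) :: hpow1 q.2).flatten, ?_⟩
          have hdec : decode1 (code1 t) = (false, !b) :: (List.replicate n (false, !b) ++
              ((code1 t).2.map fun q => (true, q.1) :: hpow1 q.2).flatten) := by
            unfold decode1
            conv_lhs => rw [show (code1 t).1 = e from he.symm]
            rw [show hpow1 e = List.replicate (n+1) (false, !b) by
              unfold hpow1; rw [hn, hsign], List.replicate_succ, List.cons_append]
          exact iht.symm.trans hdec
        exact h [] false b r (by simp [hr])
      show decode1 ((code1 t).1 + eps1 b, (code1 t).2) = (false, b) :: t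
      have hstep : decode1 ((code1 t).1 + eps1 b, (code1 t).2)
          = (false, b) :: decode1 (code1 t) := by
        unfold decode1
        rw [hpow1_cons hcond, List.cons_append]
      rw [hstep, iht]

def val1 (m k : ℕ) : List (Bool × Bool) → ℤ
  | [] => 0
  | (c, b) :: t => (if c then (k : ℤ) else (m : ℤ)) * eps1 b + val1 m k t

lemma lift_mk_eq (m k : ℕ) (w : List (Bool × Bool)) :
    (FreeGroup.lift (fun b : Bool => Multiplicative.ofAdd (if b then (k : ℤ) else (m : ℤ))))
      (FreeGroup.mk w) = Multiplicative.ofAdd (val1 m k w) := by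
  rw [FreeGroup.lift_mk]
  induction w with
  | nil => simp [val1]
  | cons a t ih =>
    obtain ⟨c, b⟩ := a
    simp only [List.map_cons, List.prod_cons, ih, val1]
    cases b <;> cases c <;>
      simp [eps1, ← ofAdd_add, ← ofAdd_neg] <;> ring_nf

def pairSum1 (m k : ℕ) (l : List (Bool × ℤ)) : ℤ :=
  (l.map fun q => (k : ℤ) * eps1 q.1 + (m : ℤ) * q.2).sum

lemma val_code (m k : ℕ) (w : List (Bool × Bool)) :
    val1 m k w = (m : ℤ) * (code1 w).1 + pairSum1 m k (code1 w).2 := by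
  induction w with
  | nil => simp [val1, code1, pairSum1]
  | cons a t ih =>
    obtain ⟨c, b⟩ := a
    cases c
    · show (m : ℤ) * eps1 b + val1 m k t = _
      rw [ih]
      show _ = (m : ℤ) * ((code1 t).1 + eps1 b) + pairSum1 m k (code1 t).2
      ring
    · show (k : ℤ) * eps1 b + val1 m k t = _
      rw [ih]
      show _ = (m : ℤ) * 0 + pairSum1 m k ((b, (code1 t).1) :: (code1 t).2)
      unfold pairSum1
      rw [List.map_cons, List.sum_cons]
      ring

lemma code_len (w : List (Bool × Bool)) : (code1 w).2.length = xcount1 w := by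
  induction w with
  | nil => simp [code1, xcount1]
  | cons a t ih =>
    obtain ⟨c, b⟩ := a
    cases c <;> simp [code1, xcount1, List.countP_cons] at * <;> omega

lemma code_bound (w : List (Bool × Bool)) :
    (code1 w).1.natAbs ≤ w.length ∧ ∀ p ∈ (code1 w).2, p.2.natAbs ≤ w.length := by
  induction w with
  | nil => simp [code1]
  | cons a t ih =>
    obtain ⟨c, b⟩ := a
    obtain ⟨ih1, ih2⟩ := ih
    cases c
    · refine ⟨?_, fun p hp => ?_⟩
      · show ((code1 t).1 + eps1 b).natAbs ≤ t.length + 1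
        cases b <;> simp [eps1] <;> omega
      · exact le_trans (ih2 p hp) (by simp)
    · refine ⟨by simp [code1], fun p hp => ?_⟩
      show p.2.natAbs ≤ t.length + 1
      rcases List.mem_cons.mp hp with rfl | hp'
      · simpa using Nat.le_succ_of_le ih1
      · exact Nat.le_succ_of_le (ih2 p hp')

lemma int_reconstruct {e1 e2 : ℤ} (h1 : e1.natAbs = e2.natAbs)
    (h2 : decide (0 ≤ e1) = decide (0 ≤ e2)) : e1 = e2 := by
  have := decide_eq_decide.mp h2
  omega

/-- `rhoD1 φ d M` counts the cyclically reduced words of length at most `M` in the basis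
`{h, x}` lying in `I_g = ker φ` with degree `d`. -/
noncomputable def rhoD1 (φ : FreeGroup Bool →* Multiplicative ℤ) (d M : ℕ) : ℕ :=
  Set.ncard { w : List (Bool × Bool) |
    w.length ≤ M ∧ CyclicallyReduced1 w ∧ xcount1 w = d ∧ FreeGroup.mk w ∈ MonoidHom.ker φ }

/-- Let `F = ⟨a⟩` be infinite cyclic (modelled as `Multiplicative ℤ`), `H = ⟨a^m⟩` with
`m ≥ 1`, `g = a^k` with `k ≥ 0` coprime to `m`, and fix `d ≥ 1`.  Then `ρ_{g,d}(M)` is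
bounded above by a polynomial of degree `d` in `M`. -/
theorem stmt14 (m k : ℕ) (hm : 1 ≤ m) (hmk : Nat.Coprime m k) (d : ℕ) (hd : 1 ≤ d) :
    ∃ C : ℝ, 0 < C ∧ ∀ M : ℕ, 1 ≤ M →
      (rhoD1 (FreeGroup.lift
          (fun b : Bool => Multiplicative.ofAdd (if b then (k : ℤ) else (m : ℤ)))) d M : ℝ)
        ≤ C * (M : ℝ) ^ d := by
  classical
  refine ⟨(8 : ℝ) ^ d, by positivity, ?_⟩
  intro M hM
  set φ := FreeGroup.lift
      (fun b : Bool => Multiplicative.ofAdd (if b then (k : ℤ) else (m : ℤ))) with hφ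
  set S := { w : List (Bool × Bool) |
    w.length ≤ M ∧ CyclicallyReduced1 w ∧ xcount1 w = d ∧ FreeGroup.mk w ∈ MonoidHom.ker φ }
    with hS
  -- encode each word
  let F : List (Bool × Bool) → (Fin d → Bool × Bool × Fin (M + 1)) := fun w i =>
    if h : (i : ℕ) < (code1 w).2.length then
      let q := (code1 w).2.get ⟨i, h⟩
      (q.1, decide (0 ≤ q.2), ⟨min q.2.natAbs M, Nat.lt_succ_of_le (min_le_right _ _)⟩)
    else (true, true, ⟨0, Nat.succ_pos M⟩)
  have hval0 : ∀ w ∈ S, val1 m k w = 0 := by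
    intro w hw
    have hker := hw.2.2.2
    rw [MonoidHom.mem_ker, hφ, lift_mk_eq] at hker
    have := Multiplicative.toAdd.injective (a₁ := Multiplicative.ofAdd (val1 m k w))
      (a₂ := 1) (by simpa using hker)
    simpa using hker
  have hinj : Set.InjOn F S := by
    intro w1 hw1 w2 hw2 hF
    have hlen1 : (code1 w1).2.length = d := by rw [code_len, hw1.2.2.1]
    have hlen2 : (code1 w2).2.length = d := by rw [code_len, hw2.2.2.1]
    have hl : (code1 w1).2 = (code1 w2).2 := by
      apply List.ext_get (by omega)
      intro i hi1 hi2
      have hFi := congrFun hF ⟨i, by omega⟩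
      simp only [F, dif_pos (show (i : ℕ) < (code1 w1).2.length from hi1),
        dif_pos (show (i : ℕ) < (code1 w2).2.length from hi2)] at hFi
      set q1 := (code1 w1).2.get ⟨i, hi1⟩ with hq1
      set q2 := (code1 w2).2.get ⟨i, hi2⟩ with hq2
      simp only [Prod.mk.injEq, Fin.mk.injEq] at hFi
      obtain ⟨hb, hsgn, hminEq⟩ := hFi
      have hbd1 : q1.2.natAbs ≤ M :=
        le_trans ((code_bound w1).2 q1 (by rw [hq1]; exact List.get_mem _ _)) hw1.1
      have hbd2 : q2.2.natAbs ≤ M :=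
        le_trans ((code_bound w2).2 q2 (by rw [hq2]; exact List.get_mem _ _)) hw2.1
      have habs : q1.2.natAbs = q2.2.natAbs := by
        rw [min_eq_left hbd1, min_eq_left hbd2] at hminEq
        exact hminEq
      have he : q1.2 = q2.2 := int_reconstruct habs hsgn
      exact Prod.ext hb he
    have he0 : (code1 w1).1 = (code1 w2).1 := by
      have h1 := hval0 w1 hw1
      have h2 := hval0 w2 hw2
      rw [val_code] at h1 h2
      rw [hl] at h1
      have hmne : (m : ℤ) ≠ 0 := by exact_mod_cast Nat.one_le_iff_ne_zero.mp hm
      have : (m : ℤ) * (code1 w1).1 = (m : ℤ) * (code1 w2).1 := by omega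
      exact mul_left_cancel₀ hmne this
    have hcode : code1 w1 = code1 w2 := Prod.ext he0 hl
    calc w1 = decode1 (code1 w1) := (decode_code (noInv_of_cyclred hw1.2.1)).symm
      _ = decode1 (code1 w2) := by rw [hcode]
      _ = w2 := decode_code (noInv_of_cyclred hw2.2.1)
  have hcard : rhoD1 φ d M ≤ (4 * (M + 1)) ^ d := by
    have h1 : rhoD1 φ d M = S.ncard := rfl
    rw [h1, ← Set.ncard_image_of_injOn hinj]
    calc (F '' S).ncard ≤ (Set.univ : Set (Fin d → Bool × Bool × Fin (M + 1))).ncard :=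
          Set.ncard_le_ncard (Set.subset_univ _) Set.finite_univ
      _ = Fintype.card (Fin d → Bool × Bool × Fin (M + 1)) := by
          rw [Set.ncard_univ, Nat.card_eq_fintype_card]
      _ = (4 * (M + 1)) ^ d := by
          simp [Fintype.card_fun]
          ring
  have hstep : ((4 * (M + 1)) ^ d : ℝ) ≤ 8 ^ d * (M : ℝ) ^ d := by
    rw [← mul_pow]
    apply pow_le_pow_left₀ (by positivity)
    have : (1 : ℝ) ≤ (M : ℝ) := by exact_mod_cast hM
    push_cast
    nlinarith
  calc (rhoD1 φ d M : ℝ) ≤ ((4 * (M + 1)) ^ d : ℕ) := by exact_mod_cast hcard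
    _ ≤ 8 ^ d * (M : ℝ) ^ d := by push_cast; push_cast at hstep; exact hstep
end

section
/- Suppose H ≤ F_n has rank at least 2 and the degree set D_g of the ideal I_g is nonempty. If D_g contains an odd number d, then every integer ≥ 3d lies in D_g^{ex}; if D_g contains only even numbers and d ∈ D_g, then every even integer ≥ 2d lies in D_g^{ex}. In particular, D_g \ D_g^{ex} is finite. -/
/-- A nondecreasing counting function has exponential growth if it is bounded between two
exponentials for all sufficiently large arguments. -/
def ExpGrowth (ρ : ℕ → ℕ) : Prop :=
  ∃ α β : ℝ, 0 < α ∧ 0 < β ∧ ∃ M₀ : ℕ, ∀ M : ℕ, M₀ ≤ M →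
    Real.exp (α * M) ≤ (ρ M : ℝ) ∧ (ρ M : ℝ) ≤ Real.exp (β * M)

/-- The degree set `D_g`: the degrees of nontrivial equations in `I_g = ker φ`. -/
def degreeSet {n r : ℕ} (φ : FreeGroup (Fin r ⊕ Unit) →* FreeGroup (Fin n)) : Set ℕ :=
  { d | ∃ w : List ((Fin r ⊕ Unit) × Bool), CyclicallyReduced w ∧ w ≠ [] ∧
      FreeGroup.mk w ∈ MonoidHom.ker φ ∧ xcount w = d }

/-- `D_g^{ex}`: the degrees `d ∈ D_g` for which `ρ_{g,d}` grows exponentially. -/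
def degreeSetExp {n r : ℕ} (φ : FreeGroup (Fin r ⊕ Unit) →* FreeGroup (Fin n)) : Set ℕ :=
  { d ∈ degreeSet φ | ExpGrowth (rhoD φ d) }


/-- no cancellation between adjacent letters -/
def NoCan {β : Type*} (a b : β × Bool) : Prop := ¬(a.1 = b.1 ∧ a.2 = !b.2)

lemma noCan_of_snd_eq {β : Type*} {a b : β × Bool} (h : a.2 = b.2) : NoCan a b := by
  rintro ⟨h1, h2⟩; rw [h] at h2; simp at h2

lemma noCan_of_fst_ne {β : Type*} {a b : β × Bool} (h : a.1 ≠ b.1) : NoCan a b :=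
  fun hc => h hc.1

lemma noCan_of_ne {β : Type*} {a b : β × Bool} (h : b ≠ (a.1, !a.2)) : NoCan a b := by
  rintro ⟨h1, h2⟩
  exact h (Prod.ext h1.symm (by simp [h2]))

lemma reduce_eq_self_of_chain' {β : Type*} [DecidableEq β] {L : List (β × Bool)}
    (h : List.Chain' NoCan L) : FreeGroup.reduce L = L := by
  induction L with
  | nil => rfl
  | cons a L ih =>
    rw [FreeGroup.reduce.cons, ih h.tail]
    cases L with
    | nil => rfl
    | cons b tl =>
      have hab : NoCan a b := (List.isChain_cons_cons.1 h).1
      show (if a.1 = b.1 ∧ a.2 = !b.2 then tl else a :: b :: tl) = a :: b :: tl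
      rw [if_neg hab]

lemma chain'_reduce {β : Type*} [DecidableEq β] (L : List (β × Bool)) :
    List.Chain' NoCan (FreeGroup.reduce L) := by
  refine List.isChain_iff_getElem.2 ?_
  intro i hlen
  by_contra hc
  rw [NoCan, not_not] at hc
  obtain ⟨h1, h2⟩ := hc
  set Lr := FreeGroup.reduce L with hLr
  have hi1 : i < Lr.length := by omega
  have hi2 : i + 1 < Lr.length := by omega
  have e1 : Lr = Lr.take i ++ Lr.drop i := (List.take_append_drop i Lr).symm
  have e2 : Lr.drop i = Lr[i] :: Lr.drop (i+1) := List.drop_eq_getElem_cons hi1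
  have e3 : Lr.drop (i+1) = Lr[i+1] :: Lr.drop (i+2) := List.drop_eq_getElem_cons hi2
  have e4 : Lr[i+1] = (Lr[i].1, !Lr[i].2) := Prod.ext h1.symm (by simp [hLr, h2])
  refine FreeGroup.reduce.not (L₁ := L) (L₂ := Lr.take i) (L₃ := Lr.drop (i+2))
    (x := Lr[i].1) (b := Lr[i].2) ?_
  show Lr = _
  calc Lr = Lr.take i ++ Lr.drop i := e1
    _ = Lr.take i ++ (Lr[i] :: (Lr[i+1] :: Lr.drop (i+2))) := by rw [e2, e3]
    _ = _ := by rw [e4]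

lemma chain'_of_cyclicallyReduced {r : ℕ} {w : List ((Fin r ⊕ Unit) × Bool)}
    (h : CyclicallyReduced w) : List.Chain' NoCan w := by
  have := chain'_reduce (w ++ w)
  rw [CyclicallyReduced] at h
  rw [h] at this
  exact (List.isChain_append.1 this).1

lemma cyclicallyReduced_of_chain' {r : ℕ} {z : List ((Fin r ⊕ Unit) × Bool)}
    (h1 : List.Chain' NoCan z)
    (h2 : ∀ a ∈ z.getLast?, ∀ b ∈ z.head?, NoCan a b) : CyclicallyReduced z :=
  reduce_eq_self_of_chain' (List.isChain_append.2 ⟨h1, h1, h2⟩)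

lemma mem_head?_append {γ : Type*} {l1 l2 : List γ} {b : γ} (h : b ∈ (l1 ++ l2).head?) :
    b ∈ l1 ∨ b ∈ l2.head? := by
  cases l1 <;> simp_all

lemma chain'_of_forall_mem {γ : Type*} {R : γ → γ → Prop} {l : List γ}
    (h : ∀ a ∈ l, ∀ b ∈ l, R a b) : List.Chain' R l := by
  induction l with
  | nil => exact List.isChain_nil
  | cons a l ih =>
    refine List.isChain_cons.2 ⟨fun y hy => h a (by simp) y
      (List.mem_cons_of_mem _ (List.mem_of_mem_head? hy)), ih fun a ha b hb =>
      h a (List.mem_cons_of_mem _ ha) b (List.mem_cons_of_mem _ hb)⟩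

lemma pick4 {β : Type*} [DecidableEq β] {a b c d : β}
    (hab : a ≠ b) (hac : a ≠ c) (had : a ≠ d) (hbc : b ≠ c) (hbd : b ≠ d) (hcd : c ≠ d)
    (e₁ e₂ e₃ : β) : ∃ x, (x = a ∨ x = b ∨ x = c ∨ x = d) ∧ x ≠ e₁ ∧ x ≠ e₂ ∧ x ≠ e₃ := by
  have h4 : ({a, b, c, d} : Finset β).card = 4 := by
    rw [Finset.card_insert_of_notMem (by simp [hab, hac, had]),
      Finset.card_insert_of_notMem (by simp [hbc, hbd]),
      Finset.card_insert_of_notMem (by simp [hcd, Finset.mem_singleton]),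
      Finset.card_singleton]
  have h3 : ({e₁, e₂, e₃} : Finset β).card ≤ 3 := by
    refine le_trans (Finset.card_insert_le _ _) ?_
    have := Finset.card_insert_le e₂ ({e₃} : Finset β)
    simp at this ⊢
    omega
  have hns : ¬ ({a, b, c, d} : Finset β) ⊆ {e₁, e₂, e₃} := by
    intro hs
    have := Finset.card_le_card hs
    omega
  obtain ⟨x, hx, hxe⟩ := Finset.not_subset.1 hns
  simp only [Finset.mem_insert, Finset.mem_singleton] at hx hxe
  push_neg at hxe
  exact ⟨x, hx, hxe.1, hxe.2.1, hxe.2.2⟩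

/-- The word `u w u⁻¹ x⁻ᵏ c' w' c'⁻¹ xᵏ` where `u = f·h₀·t·h₀·c`. -/
def zword {r : ℕ} (f c c' : (Fin r ⊕ Unit) × Bool) (i0 : Fin r) (k : ℕ)
    (w w' t : List ((Fin r ⊕ Unit) × Bool)) : List ((Fin r ⊕ Unit) × Bool) :=
  f :: ((Sum.inl i0 : Fin r ⊕ Unit), true) :: (t ++ (((Sum.inl i0 : Fin r ⊕ Unit), true) :: c ::
    (w ++ ((c.1, !c.2) :: ((Sum.inl i0 : Fin r ⊕ Unit), false) ::
      ((t.map fun g => (g.1, !g.2)).reverse ++ (((Sum.inl i0 : Fin r ⊕ Unit), false) :: (f.1, !f.2) ::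
        (List.replicate k ((Sum.inr () : Fin r ⊕ Unit), false) ++ (c' ::
          (w' ++ ((c'.1, !c'.2) :: List.replicate k ((Sum.inr () : Fin r ⊕ Unit), true)))))))))))

lemma zword_length {r : ℕ} (f c c' : (Fin r ⊕ Unit) × Bool) (i0 : Fin r) (k : ℕ)
    (w w' t : List ((Fin r ⊕ Unit) × Bool)) :
    (zword f c c' i0 k w w' t).length = 2 * t.length + w.length + w'.length + 2 * k + 10 := by
  simp [zword]
  omega

lemma zword_drop_take {r : ℕ} (f c c' : (Fin r ⊕ Unit) × Bool) (i0 : Fin r) (k : ℕ)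
    (w w' t : List ((Fin r ⊕ Unit) × Bool)) :
    ((zword f c c' i0 k w w' t).drop 2).take t.length = t := by
  rw [zword]
  simp only [List.drop_succ_cons, List.drop_zero]
  exact List.take_left

lemma zword_ker {n r : ℕ} (φ : FreeGroup (Fin r ⊕ Unit) →* FreeGroup (Fin n))
    (f c c' : (Fin r ⊕ Unit) × Bool) (i0 : Fin r) (k : ℕ)
    (w w' t : List ((Fin r ⊕ Unit) × Bool))
    (hw : φ (FreeGroup.mk w) = 1) (hw' : φ (FreeGroup.mk w') = 1) :
    φ (FreeGroup.mk (zword f c c' i0 k w w' t)) = 1 := by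
  have hsplit : zword f c c' i0 k w w' t =
      ([f, ((Sum.inl i0 : Fin r ⊕ Unit), true)] ++ t ++ [((Sum.inl i0 : Fin r ⊕ Unit), true), c]) ++ (w ++
        (FreeGroup.invRev ([f, ((Sum.inl i0 : Fin r ⊕ Unit), true)] ++ t ++ [((Sum.inl i0 : Fin r ⊕ Unit), true), c]) ++
          (FreeGroup.invRev (List.replicate k ((Sum.inr () : Fin r ⊕ Unit), true)) ++
            ([c'] ++ (w' ++ (FreeGroup.invRev [c'] ++
              List.replicate k ((Sum.inr () : Fin r ⊕ Unit), true))))))) := by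
    simp [zword, FreeGroup.invRev]
  rw [hsplit]
  simp only [← FreeGroup.mul_mk, ← FreeGroup.inv_mk, map_mul, map_inv, hw, hw']
  group

lemma zword_xcount {r : ℕ} (f c c' : (Fin r ⊕ Unit) × Bool) (i0 : Fin r) (k : ℕ)
    (w w' t : List ((Fin r ⊕ Unit) × Bool))
    (hf : ∃ i, f.1 = Sum.inl i) (hc : ∃ i, c.1 = Sum.inl i) (hc' : ∃ i, c'.1 = Sum.inl i)
    (ht : ∀ a ∈ t, ∃ i, a.1 = Sum.inl i) :
    xcount (zword f c c' i0 k w w' t) = xcount w + xcount w' + 2 * k := by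
  obtain ⟨if_, hf⟩ := hf
  obtain ⟨ic, hc⟩ := hc
  obtain ⟨ic', hc'⟩ := hc'
  have htc : List.countP (fun l => match l.1 with | Sum.inr _ => true | Sum.inl _ => false) t
      = 0 := List.countP_eq_zero.2 (fun a ha => by obtain ⟨i, hi⟩ := ht a ha; simp [hi])
  have htc2 : List.countP (fun l => match l.1 with | Sum.inr _ => true | Sum.inl _ => false)
      ((t.map fun g => (g.1, !g.2)).reverse) = 0 :=
    List.countP_eq_zero.2 (fun a ha => by
      rw [List.mem_reverse, List.mem_map] at ha
      obtain ⟨b, hb, rfl⟩ := ha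
      obtain ⟨i, hi⟩ := ht b hb
      simp [hi])
  have hrep : ∀ b : Bool, List.countP
      (fun l => match l.1 with | Sum.inr _ => true | Sum.inl _ => false)
      (List.replicate k ((Sum.inr () : Fin r ⊕ Unit), b)) = k := by
    intro b
    rw [List.countP_replicate]
    simp
  simp [zword, xcount, List.countP_cons, List.countP_append, htc, htc2, hf, hc, hc', hrep]
  omega

lemma zword_cr {r : ℕ} {f c c' : (Fin r ⊕ Unit) × Bool} {i0 : Fin r} (k : ℕ)
    {w w' t : List ((Fin r ⊕ Unit) × Bool)} (hwne : w ≠ []) (hw'ne : w' ≠ [])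
    (hw : List.Chain' NoCan w) (hw' : List.Chain' NoCan w')
    (hcw : c ≠ ((w.head hwne).1, !(w.head hwne).2))
    (hcl : c ≠ w.getLast hwne)
    (hc0 : c ≠ (Sum.inl i0, false))
    (hcinl : ∃ i, c.1 = Sum.inl i)
    (hc'w : c' ≠ ((w'.head hw'ne).1, !(w'.head hw'ne).2))
    (hc'l : c' ≠ w'.getLast hw'ne)
    (hc'inl : ∃ i, c'.1 = Sum.inl i)
    (hf0 : f ≠ (Sum.inl i0, false))
    (hfc' : f ≠ c')
    (hfinl : ∃ i, f.1 = Sum.inl i)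
    (ht : ∀ a ∈ t, a.2 = true ∧ ∃ i, a.1 = Sum.inl i) :
    CyclicallyReduced (zword f c c' i0 k w w' t) := by
  obtain ⟨w0, wt, rfl⟩ := List.exists_cons_of_ne_nil hwne
  obtain ⟨w0', wt', rfl⟩ := List.exists_cons_of_ne_nil hw'ne
  simp only [List.head_cons] at hcw hc'w
  -- abbreviations
  set g0 : (Fin r ⊕ Unit) × Bool := (Sum.inl i0, true) with hg0
  set g0' : (Fin r ⊕ Unit) × Bool := (Sum.inl i0, false) with hg0'
  set xf : (Fin r ⊕ Unit) × Bool := (Sum.inr (), false) with hxf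
  set xt : (Fin r ⊕ Unit) × Bool := (Sum.inr (), true) with hxt
  set tR : List ((Fin r ⊕ Unit) × Bool) := (t.map fun g => (g.1, !g.2)).reverse with htRdef
  set wl := (w0 :: wt).getLast (List.cons_ne_nil _ _) with hwl
  set wl' := (w0' :: wt').getLast (List.cons_ne_nil _ _) with hwl'
  -- basic NoCan facts
  have Ncw0 : NoCan c w0 := by rintro ⟨h1, h2⟩; exact hcw (Prod.ext h1 h2)
  have Nwlc : NoCan wl (c.1, !c.2) := by
    rintro ⟨h1, h2⟩
    simp only [Bool.not_not] at h2
    exact hcl (Prod.ext h1.symm h2.symm)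
  have Ng0c : NoCan g0 c := by
    rintro ⟨h1, h2⟩
    refine hc0 (Prod.ext h1.symm ?_)
    simpa [hg0, hg0'] using h2.symm
  have Ncng0' : NoCan (c.1, !c.2) g0' := by
    rintro ⟨h1, h2⟩
    simp only [Bool.not_false] at h2
    refine hc0 (Prod.ext h1 ?_)
    simpa using h2
  have Nfg0 : NoCan f g0 := by
    rintro ⟨h1, h2⟩
    simp only [hg0, Bool.not_true] at h2
    exact hf0 (Prod.ext h1 h2)
  have Ng0'fn : NoCan g0' (f.1, !f.2) := by
    rintro ⟨h1, h2⟩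
    simp only [Bool.not_not] at h2
    exact hf0 (Prod.ext h1.symm h2.symm)
  have Nfnc' : NoCan (f.1, !f.2) c' := by
    rintro ⟨h1, h2⟩
    refine hfc' (Prod.ext h1 ?_)
    have h2' : (!f.2) = !c'.2 := h2
    simpa using h2'
  have Nc'w0' : NoCan c' w0' := by rintro ⟨h1, h2⟩; exact hc'w (Prod.ext h1 h2)
  have Nwl'c' : NoCan wl' (c'.1, !c'.2) := by
    rintro ⟨h1, h2⟩
    simp only [Bool.not_not] at h2
    exact hc'l (Prod.ext h1.symm h2.symm)
  have Nc'nf : NoCan (c'.1, !c'.2) f := by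
    rintro ⟨h1, h2⟩
    refine hfc' (Prod.ext h1.symm ?_)
    have h2' : (!c'.2) = !f.2 := h2
    have := (Bool.not_inj h2').symm
    simpa using this
  obtain ⟨icf, hficf⟩ := hfinl
  obtain ⟨icc, hcicc⟩ := hcinl
  obtain ⟨icc', hc'icc⟩ := hc'inl
  -- properties of t and tR
  have htR : ∀ a ∈ tR, a.2 = false ∧ ∃ i, a.1 = Sum.inl i := by
    intro a ha
    rw [htRdef, List.mem_reverse, List.mem_map] at ha
    obtain ⟨b, hb, rfl⟩ := ha
    obtain ⟨h2, i, h1⟩ := ht b hb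
    exact ⟨by simp [h2], ⟨i, h1⟩⟩
  have hChainT : List.Chain' NoCan t :=
    chain'_of_forall_mem fun a ha b hb => noCan_of_snd_eq (by rw [(ht a ha).1, (ht b hb).1])
  have hChainTR : List.Chain' NoCan tR :=
    chain'_of_forall_mem fun a ha b hb => noCan_of_snd_eq (by rw [(htR a ha).1, (htR b hb).1])
  have hChainXf : List.Chain' NoCan (List.replicate k xf) :=
    chain'_of_forall_mem fun a ha b hb => noCan_of_snd_eq (by
      rw [List.eq_of_mem_replicate ha, List.eq_of_mem_replicate hb])
  have hChainXt : List.Chain' NoCan (List.replicate k xt) :=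
    chain'_of_forall_mem fun a ha b hb => noCan_of_snd_eq (by
      rw [List.eq_of_mem_replicate ha, List.eq_of_mem_replicate hb])
  -- the tower
  have B8 : List.Chain' NoCan ((c'.1, !c'.2) :: List.replicate k xt) := by
    refine List.isChain_cons.2 ⟨fun y hy => ?_, hChainXt⟩
    rw [List.eq_of_mem_replicate (List.mem_of_mem_head? hy)]
    exact noCan_of_fst_ne (by simp [hc'icc, hxt])
  have B7 : List.Chain' NoCan ((w0' :: wt') ++ ((c'.1, !c'.2) :: List.replicate k xt)) := by
    refine List.isChain_append.2 ⟨hw', B8, fun a ha b hb => ?_⟩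
    rw [List.getLast?_eq_getLast (List.cons_ne_nil _ _), Option.mem_some_iff] at ha
    rw [List.head?_cons, Option.mem_some_iff] at hb
    rw [← ha, ← hwl] at *
    rw [← hb]
    exact ha ▸ hb ▸ Nwl'c'
  have B6 : List.Chain' NoCan (c' :: ((w0' :: wt') ++ ((c'.1, !c'.2) :: List.replicate k xt))) := by
    refine List.isChain_cons.2 ⟨fun y hy => ?_, B7⟩
    rw [List.cons_append, List.head?_cons, Option.mem_some_iff] at hy
    subst hy
    exact Nc'w0'
  have B5 : List.Chain' NoCan (List.replicate k xf ++
      (c' :: ((w0' :: wt') ++ ((c'.1, !c'.2) :: List.replicate k xt)))) := by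
    refine List.isChain_append.2 ⟨hChainXf, B6, fun a ha b hb => ?_⟩
    rw [List.eq_of_mem_replicate (List.mem_of_mem_getLast? ha)]
    rw [List.head?_cons, Option.mem_some_iff] at hb
    rw [← hb]
    exact noCan_of_fst_ne (by simp [hc'icc, hxf])
  have B4 : List.Chain' NoCan (g0' :: (f.1, !f.2) :: (List.replicate k xf ++
      (c' :: ((w0' :: wt') ++ ((c'.1, !c'.2) :: List.replicate k xt))))) := by
    refine List.isChain_cons.2 ⟨fun y hy => ?_, List.isChain_cons.2 ⟨fun y hy => ?_, B5⟩⟩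
    · rw [List.head?_cons, Option.mem_some_iff] at hy
      subst hy
      exact Ng0'fn
    · rcases mem_head?_append hy with h | h
      · rw [List.eq_of_mem_replicate h]
        exact noCan_of_fst_ne (by simp [hficf, hxf])
      · rw [List.head?_cons, Option.mem_some_iff] at h
        subst h
        exact Nfnc'
  have B3 : List.Chain' NoCan (tR ++ (g0' :: (f.1, !f.2) :: (List.replicate k xf ++
      (c' :: ((w0' :: wt') ++ ((c'.1, !c'.2) :: List.replicate k xt)))))) := by
    refine List.isChain_append.2 ⟨hChainTR, B4, fun a ha b hb => ?_⟩
    rw [List.head?_cons, Option.mem_some_iff] at hb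
    refine noCan_of_snd_eq ?_
    rw [(htR a (List.mem_of_mem_getLast? ha)).1, ← hb, hg0']
  have B2 : List.Chain' NoCan ((c.1, !c.2) :: g0' :: (tR ++ (g0' :: (f.1, !f.2) ::
      (List.replicate k xf ++ (c' :: ((w0' :: wt') ++
        ((c'.1, !c'.2) :: List.replicate k xt))))))) := by
    refine List.isChain_cons.2 ⟨fun y hy => ?_, List.isChain_cons.2 ⟨fun y hy => ?_, B3⟩⟩
    · rw [List.head?_cons, Option.mem_some_iff] at hy
      subst hy
      exact Ncng0'
    · rcases mem_head?_append hy with h | h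
      · exact noCan_of_snd_eq (by rw [(htR y h).1, hg0'])
      · rw [List.head?_cons, Option.mem_some_iff] at h
        exact noCan_of_snd_eq (by rw [← h, hg0'])
  have B1 : List.Chain' NoCan ((w0 :: wt) ++ ((c.1, !c.2) :: g0' :: (tR ++ (g0' :: (f.1, !f.2) ::
      (List.replicate k xf ++ (c' :: ((w0' :: wt') ++
        ((c'.1, !c'.2) :: List.replicate k xt)))))))) := by
    refine List.isChain_append.2 ⟨hw, B2, fun a ha b hb => ?_⟩
    rw [List.getLast?_eq_getLast (List.cons_ne_nil _ _), Option.mem_some_iff] at ha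
    rw [List.head?_cons, Option.mem_some_iff] at hb
    rw [← hwl] at ha
    subst ha
    subst hb
    exact Nwlc
  have B0 : List.Chain' NoCan (g0 :: c :: ((w0 :: wt) ++ ((c.1, !c.2) :: g0' :: (tR ++
      (g0' :: (f.1, !f.2) :: (List.replicate k xf ++ (c' :: ((w0' :: wt') ++
        ((c'.1, !c'.2) :: List.replicate k xt))))))))) := by
    refine List.isChain_cons.2 ⟨fun y hy => ?_, List.isChain_cons.2 ⟨fun y hy => ?_, B1⟩⟩
    · rw [List.head?_cons, Option.mem_some_iff] at hy
      subst hy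
      exact Ng0c
    · rw [List.cons_append, List.head?_cons, Option.mem_some_iff] at hy
      subst hy
      exact Ncw0
  have Bt : List.Chain' NoCan (t ++ (g0 :: c :: ((w0 :: wt) ++ ((c.1, !c.2) :: g0' :: (tR ++
      (g0' :: (f.1, !f.2) :: (List.replicate k xf ++ (c' :: ((w0' :: wt') ++
        ((c'.1, !c'.2) :: List.replicate k xt)))))))))) := by
    refine List.isChain_append.2 ⟨hChainT, B0, fun a ha b hb => ?_⟩
    rw [List.head?_cons, Option.mem_some_iff] at hb
    refine noCan_of_snd_eq ?_
    rw [(ht a (List.mem_of_mem_getLast? ha)).1, ← hb, hg0]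
  have BZ : List.Chain' NoCan (zword f c c' i0 k (w0 :: wt) (w0' :: wt') t) := by
    rw [zword, ← hg0, ← hg0', ← hxf, ← hxt, ← htRdef]
    refine List.isChain_cons.2 ⟨fun y hy => ?_, List.isChain_cons.2 ⟨fun y hy => ?_, Bt⟩⟩
    · rw [List.head?_cons, Option.mem_some_iff] at hy
      subst hy
      exact Nfg0
    · rcases mem_head?_append hy with h | h
      · exact noCan_of_snd_eq (by rw [hg0, (ht y h).1])
      · rw [List.head?_cons, Option.mem_some_iff] at h
        exact noCan_of_snd_eq (by rw [← h])
  -- the cyclic junction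
  refine cyclicallyReduced_of_chain' BZ ?_
  have glcons : ∀ (x : (Fin r ⊕ Unit) × Bool) (l : List ((Fin r ⊕ Unit) × Bool)), l ≠ [] →
      (x :: l).getLast? = l.getLast? := by
    intro x l hl
    rw [show x :: l = [x] ++ l from rfl, List.getLast?_append_of_ne_nil _ hl]
  have hzl : (zword f c c' i0 k (w0 :: wt) (w0' :: wt') t).getLast? =
      ((c'.1, !c'.2) :: List.replicate k xt).getLast? := by
    rw [zword, ← hg0, ← hg0', ← hxf, ← hxt, ← htRdef]
    rw [glcons _ _ (by simp)]
    rw [glcons _ _ (by simp)]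
    rw [List.getLast?_append_of_ne_nil _ (by simp)]
    rw [glcons _ _ (by simp)]
    rw [glcons _ _ (by simp)]
    rw [List.getLast?_append_of_ne_nil _ (by simp)]
    rw [glcons _ _ (by simp)]
    rw [glcons _ _ (by simp)]
    rw [List.getLast?_append_of_ne_nil _ (by simp)]
    rw [glcons _ _ (by simp)]
    rw [glcons _ _ (by simp)]
    rw [List.getLast?_append_of_ne_nil _ (by simp)]
    rw [glcons _ _ (by simp)]
    rw [List.getLast?_append_of_ne_nil _ (by simp)]
  intro a ha b hb
  rw [hzl] at ha
  have hbf : b = f := by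
    rw [zword] at hb
    rw [List.head?_cons, Option.mem_some_iff] at hb
    exact hb.symm
  rw [hbf]
  rcases List.mem_cons.1 (List.mem_of_mem_getLast? ha) with rfl | hmem
  · exact Nc'nf
  · rw [List.eq_of_mem_replicate hmem]
    exact noCan_of_fst_ne (by simp [hxt, hficf])

lemma rhoD_le_pow {n r : ℕ} (φ : FreeGroup (Fin r ⊕ Unit) →* FreeGroup (Fin n)) (d M : ℕ) :
    rhoD φ d M ≤ (2 * r + 3) ^ M := by
  classical
  have hfin : {l : List ((Fin r ⊕ Unit) × Bool) | l.length ≤ M}.Finite :=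
    List.finite_length_le _ M
  have h1 : rhoD φ d M ≤ ({l : List ((Fin r ⊕ Unit) × Bool) | l.length ≤ M}).ncard := by
    rw [rhoD]
    exact Set.ncard_le_ncard (fun l hl => hl.1) hfin
  refine le_trans h1 ?_
  have h2 : ({l : List ((Fin r ⊕ Unit) × Bool) | l.length ≤ M}).ncard ≤
      (Set.univ : Set (Fin M → Option ((Fin r ⊕ Unit) × Bool))).ncard := by
    refine Set.ncard_le_ncard_of_injOn (fun l i => l[i.1]?) (fun a _ => Set.mem_univ _) ?_
      Set.finite_univ
    intro l1 h1' l2 h2' hf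
    refine List.ext_getElem? fun i => ?_
    rcases lt_or_ge i M with hi | hi
    · exact congrFun hf ⟨i, hi⟩
    · rw [List.getElem?_eq_none (le_trans h1' hi), List.getElem?_eq_none (le_trans h2' hi)]
  refine le_trans h2 ?_
  rw [Set.ncard_univ, Nat.card_eq_fintype_card]
  have : Fintype.card (Fin M → Option ((Fin r ⊕ Unit) × Bool)) = (2 * r + 3) ^ M := by
    simp [Fintype.card_fun]
    ring_nf
  omega

lemma if_inj {r : ℕ} {i0 i1 : Fin r} (h : i0 ≠ i1) :
    Function.Injective (fun s : Bool => if s then ((Sum.inl i0 : Fin r ⊕ Unit), true)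
      else ((Sum.inl i1 : Fin r ⊕ Unit), true)) := by
  intro s1 s2 hss
  cases s1 <;> cases s2 <;> simp_all

lemma key_lemma {n r : ℕ} (hr : 2 ≤ r) (φ : FreeGroup (Fin r ⊕ Unit) →* FreeGroup (Fin n))
    (d d' k : ℕ) (hd : d ∈ degreeSet φ) (hd' : d' ∈ degreeSet φ) :
    d + d' + 2 * k ∈ degreeSetExp φ := by
  classical
  obtain ⟨w, hwcr, hwne, hwker, hwx⟩ := hd
  obtain ⟨w', hw'cr, hw'ne, hw'ker, hw'x⟩ := hd'
  have hwch : List.Chain' NoCan w := chain'_of_cyclicallyReduced hwcr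
  have hw'ch : List.Chain' NoCan w' := chain'_of_cyclicallyReduced hw'cr
  obtain ⟨i0, hi0⟩ : ∃ i : Fin r, i.1 = 0 := ⟨⟨0, by omega⟩, rfl⟩
  obtain ⟨i1, hi1⟩ : ∃ i : Fin r, i.1 = 1 := ⟨⟨1, by omega⟩, rfl⟩
  have hi01 : i0 ≠ i1 := by
    intro h
    rw [Fin.ext_iff, hi0, hi1] at h
    omega
  have pick := fun (e₁ e₂ e₃ : (Fin r ⊕ Unit) × Bool) =>
    pick4 (a := ((Sum.inl i0 : Fin r ⊕ Unit), true)) (b := ((Sum.inl i0 : Fin r ⊕ Unit), false))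
      (c := ((Sum.inl i1 : Fin r ⊕ Unit), true)) (d := ((Sum.inl i1 : Fin r ⊕ Unit), false))
      (by simp) (by simp [hi01]) (by simp [hi01]) (by simp [hi01]) (by simp [hi01]) (by simp)
      e₁ e₂ e₃
  obtain ⟨c, hcmem, hc1, hc2, hc3⟩ :=
    pick ((w.head hwne).1, !(w.head hwne).2) (w.getLast hwne) ((Sum.inl i0 : Fin r ⊕ Unit), false)
  obtain ⟨c', hc'mem, hc'1, hc'2, -⟩ :=
    pick ((w'.head hw'ne).1, !(w'.head hw'ne).2) (w'.getLast hw'ne) (w'.getLast hw'ne)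
  obtain ⟨f, hfmem, hf0, hfc', -⟩ := pick ((Sum.inl i0 : Fin r ⊕ Unit), false) c' c'
  have hcinl : ∃ i, c.1 = Sum.inl i := by
    rcases hcmem with h | h | h | h <;> exact ⟨_, by rw [h]⟩
  have hc'inl : ∃ i, c'.1 = Sum.inl i := by
    rcases hc'mem with h | h | h | h <;> exact ⟨_, by rw [h]⟩
  have hfinl : ∃ i, f.1 = Sum.inl i := by
    rcases hfmem with h | h | h | h <;> exact ⟨_, by rw [h]⟩
  have main : ∀ t : List ((Fin r ⊕ Unit) × Bool),
      (∀ a ∈ t, a = ((Sum.inl i0 : Fin r ⊕ Unit), true) ∨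
        a = ((Sum.inl i1 : Fin r ⊕ Unit), true)) →
      CyclicallyReduced (zword f c c' i0 k w w' t) ∧
        xcount (zword f c c' i0 k w w' t) = d + d' + 2 * k ∧
        FreeGroup.mk (zword f c c' i0 k w w' t) ∈ MonoidHom.ker φ := by
    intro t ht
    have ht' : ∀ a ∈ t, a.2 = true ∧ ∃ i, a.1 = Sum.inl i := by
      intro a ha
      rcases ht a ha with rfl | rfl <;> exact ⟨rfl, _, rfl⟩
    refine ⟨zword_cr k hwne hw'ne hwch hw'ch hc1 hc2 hc3 hcinl hc'1 hc'2 hc'inl hf0 hfc'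
      hfinl ht', ?_, ?_⟩
    · rw [zword_xcount f c c' i0 k w w' t hfinl hcinl hc'inl (fun a ha => (ht' a ha).2),
        hwx, hw'x]
    · exact MonoidHom.mem_ker.2 (zword_ker φ f c c' i0 k w w' t
        (MonoidHom.mem_ker.1 hwker) (MonoidHom.mem_ker.1 hw'ker))
  have hmem : d + d' + 2 * k ∈ degreeSet φ := by
    obtain ⟨hcr, hxc, hker⟩ := main [] (by simp)
    exact ⟨zword f c c' i0 k w w' [], hcr, by rw [zword]; simp, hker, hxc⟩
  refine ⟨hmem, Real.log 2 / 4, Real.log (2 * (r : ℝ) + 3), ?_, ?_,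
    2 * (w.length + w'.length + 2 * k + 10) + 2, ?_⟩
  · have := Real.log_pos (by norm_num : (1:ℝ) < 2)
    linarith
  · refine Real.log_pos ?_
    have : (0:ℝ) ≤ (r : ℝ) := Nat.cast_nonneg r
    linarith
  intro M hM
  constructor
  · -- lower bound
    set C := w.length + w'.length + 2 * k + 10 with hC
    set L := (M - C) / 2 with hL
    set tf : (Fin L → Bool) → List ((Fin r ⊕ Unit) × Bool) := fun b =>
      (List.ofFn b).map fun s => if s then ((Sum.inl i0 : Fin r ⊕ Unit), true)
        else ((Sum.inl i1 : Fin r ⊕ Unit), true) with htf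
    have htfmem : ∀ b, ∀ a ∈ tf b, a = ((Sum.inl i0 : Fin r ⊕ Unit), true) ∨
        a = ((Sum.inl i1 : Fin r ⊕ Unit), true) := by
      intro b a ha
      rw [htf, List.mem_map] at ha
      obtain ⟨s, -, rfl⟩ := ha
      cases s
      · right; rfl
      · left; rfl
    have htflen : ∀ b, (tf b).length = L := by intro b; simp [htf]
    have hcard : 2 ^ L ≤ rhoD φ (d + d' + 2 * k) M := by
      unfold rhoD
      have hfinS : {l : List ((Fin r ⊕ Unit) × Bool) | l.length ≤ M ∧ CyclicallyReduced l ∧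
          xcount l = d + d' + 2 * k ∧ FreeGroup.mk l ∈ MonoidHom.ker φ}.Finite :=
        (List.finite_length_le _ M).subset (fun l hl => hl.1)
      have hle := Set.ncard_le_ncard_of_injOn
        (fun b => zword f c c' i0 k w w' (tf b))
        (s := (Set.univ : Set (Fin L → Bool))) ?_ ?_ hfinS
      · rw [Set.ncard_univ, Nat.card_eq_fintype_card] at hle
        simpa using hle
      · rintro b -
        obtain ⟨hcr, hxc, hker⟩ := main (tf b) (htfmem b)
        refine ⟨?_, hcr, hxc, hker⟩
        rw [zword_length, htflen b]
        omega
      · rintro b1 - b2 - heq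
        simp only at heq
        have e1 := zword_drop_take f c c' i0 k w w' (tf b1)
        have e2 := zword_drop_take f c c' i0 k w w' (tf b2)
        rw [htflen b1] at e1
        rw [htflen b2] at e2
        have etf : tf b1 = tf b2 := by rw [← e1, ← e2, heq]
        have hinj2 := if_inj hi01
        exact List.ofFn_injective (List.map_injective_iff.2 hinj2 etf)
    have h4L : M ≤ 4 * L := by omega
    have hlog2 : 0 < Real.log 2 := Real.log_pos (by norm_num)
    have hcast : (M : ℝ) ≤ 4 * (L : ℝ) := by exact_mod_cast h4L
    calc Real.exp (Real.log 2 / 4 * M) ≤ Real.exp ((L : ℝ) * Real.log 2) := by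
          refine Real.exp_le_exp.2 ?_
          nlinarith
      _ = (2 : ℝ) ^ L := by
          rw [Real.exp_nat_mul, Real.exp_log (by norm_num)]
      _ ≤ (rhoD φ (d + d' + 2 * k) M : ℝ) := by exact_mod_cast hcard
  · -- upper bound
    calc (rhoD φ (d + d' + 2 * k) M : ℝ) ≤ (((2 * r + 3) ^ M : ℕ) : ℝ) :=
          Nat.cast_le.2 (rhoD_le_pow φ _ M)
      _ = (2 * (r : ℝ) + 3) ^ M := by push_cast; ring
      _ = Real.exp (Real.log (2 * (r : ℝ) + 3)) ^ M := by
          rw [Real.exp_log (by positivity)]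
      _ = Real.exp (Real.log (2 * (r : ℝ) + 3) * M) := by
          rw [← Real.exp_nat_mul, mul_comm]

/-- Suppose `H ≤ Fₙ` has rank `r ≥ 2` and `D_g ≠ ∅`.  If `D_g` contains an odd `d`, every
integer `≥ 3d` lies in `D_g^{ex}`; if `D_g` contains only even numbers and `d ∈ D_g`,
every even integer `≥ 2d` lies in `D_g^{ex}`.  In particular `D_g \ D_g^{ex}` is finite. -/
theorem stmt15 {n r : ℕ} (hr : 2 ≤ r) (h : Fin r → FreeGroup (Fin n))
    (hbasis : Function.Injective (FreeGroup.lift h)) (g : FreeGroup (Fin n))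
    (hne : (degreeSet (FreeGroup.lift (Sum.elim h fun _ => g))).Nonempty) :
    (∀ d ∈ degreeSet (FreeGroup.lift (Sum.elim h fun _ => g)), Odd d →
        ∀ m : ℕ, 3 * d ≤ m → m ∈ degreeSetExp (FreeGroup.lift (Sum.elim h fun _ => g))) ∧
    ((∀ d ∈ degreeSet (FreeGroup.lift (Sum.elim h fun _ => g)), Even d) →
        ∀ d ∈ degreeSet (FreeGroup.lift (Sum.elim h fun _ => g)), ∀ m : ℕ, Even m →
          2 * d ≤ m → m ∈ degreeSetExp (FreeGroup.lift (Sum.elim h fun _ => g))) ∧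
    (degreeSet (FreeGroup.lift (Sum.elim h fun _ => g)) \
      degreeSetExp (FreeGroup.lift (Sum.elim h fun _ => g))).Finite := by
  set φ := FreeGroup.lift (Sum.elim h fun _ => g) with hφ
  have key := fun d d' k hd hd' => key_lemma (n := n) hr φ d d' k hd hd'
  have hsub : degreeSetExp φ ⊆ degreeSet φ := fun x hx => hx.1
  refine ⟨?_, ?_, ?_⟩
  · intro d hd hodd m hm
    obtain ⟨a, ha⟩ := hodd
    rcases Nat.even_or_odd m with ⟨p, hp⟩ | ⟨p, hp⟩
    · have := key d d ((m - 2 * d) / 2) hd hd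
      rwa [show d + d + 2 * ((m - 2 * d) / 2) = m from by omega] at this
    · have h2d : 2 * d ∈ degreeSet φ := by
        have := hsub (key d d 0 hd hd)
        rwa [show d + d + 2 * 0 = 2 * d from by omega] at this
      have := key d (2 * d) ((m - 3 * d) / 2) hd h2d
      rwa [show d + 2 * d + 2 * ((m - 3 * d) / 2) = m from by omega] at this
  · intro _ d hd m hmeven hm
    obtain ⟨p, hp⟩ := hmeven
    have := key d d ((m - 2 * d) / 2) hd hd
    rwa [show d + d + 2 * ((m - 2 * d) / 2) = m from by omega] at this
  · obtain ⟨d₀, hd₀⟩ := hne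
    have h2d₀ : 2 * d₀ ∈ degreeSet φ := by
      have := hsub (key d₀ d₀ 0 hd₀ hd₀)
      rwa [show d₀ + d₀ + 2 * 0 = 2 * d₀ from by omega] at this
    by_cases hodd : ∃ o ∈ degreeSet φ, Odd o
    · obtain ⟨o, ho, a, ha⟩ := hodd
      refine Set.Finite.subset (Set.finite_Iio (o + 2 * d₀ + 2 * d₀ + 1)) ?_
      rintro m ⟨hmD, hmX⟩
      rw [Set.mem_Iio]
      by_contra hge
      push_neg at hge
      apply hmX
      rcases Nat.even_or_odd m with ⟨p, hp⟩ | ⟨p, hp⟩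
      · have := key d₀ d₀ ((m - 2 * d₀) / 2) hd₀ hd₀
        rwa [show d₀ + d₀ + 2 * ((m - 2 * d₀) / 2) = m from by omega] at this
      · have := key o (2 * d₀) ((m - o - 2 * d₀) / 2) ho h2d₀
        rwa [show o + 2 * d₀ + 2 * ((m - o - 2 * d₀) / 2) = m from by omega] at this
    · push_neg at hodd
      refine Set.Finite.subset (Set.finite_Iio (2 * d₀ + 1)) ?_
      rintro m ⟨hmD, hmX⟩
      rw [Set.mem_Iio]
      by_contra hge
      push_neg at hge
      apply hmX
      obtain ⟨p, hp⟩ := Nat.not_odd_iff_even.1 (hodd m hmD)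
      have := key d₀ d₀ ((m - 2 * d₀) / 2) hd₀ hd₀
      rwa [show d₀ + d₀ + 2 * ((m - 2 * d₀) / 2) = m from by omega] at this
end
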